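/- arXiv:2109.06336 — 6 statements merged into one kernel-verified Lean document; each statement's English description precedes it below -/
import Mathlib

section
/- Let f : ℝ^d → [0,∞) be measurable with f(x) = η(x/|x|)·|x|^{-β} for x ≠ 0 (where β > d and η : S^{d-1} → [c₁, c₂] with 0 < c₁ ≤ c₂ < ∞). Then for every r > 1 and every x with |x| ≥ 1, the integral ∫_{|x-y|>r, |y|>r} f(x-y)f(y)/f(x) dy is bounded by 2^{1+β}(c₂²/c₁)∫_{|y|>r} |y|^{-β} dy; in particular sup_{|x|≥1} of this integral tends to 0 as r → ∞. -/
open Filter MeasureTheory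
open scoped ENNReal

-- key real inequality
lemma key_ineq (β : ℝ) (hβ : 0 < β) (a b c : ℝ) (ha : 0 < a) (hb : 0 < b)
    (hc : 0 < c) (habc : c ≤ a + b) :
    a ^ (-β) * b ^ (-β) * c ^ β ≤ 2 ^ β * (a ^ (-β) + b ^ (-β)) := by
  have h2 : (0:ℝ) < 2 := by norm_num
  have hcc : c ^ (-β) * c ^ β = 1 := by
    rw [← Real.rpow_add hc, neg_add_cancel, Real.rpow_zero]
  rcases le_or_gt (c / 2) b with h | h
  · have hb' : b ^ (-β) ≤ (c / 2) ^ (-β) :=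
      Real.rpow_le_rpow_of_nonpos (by positivity) h (by linarith)
    have hce : (c / 2) ^ (-β) = 2 ^ β * c ^ (-β) := by
      rw [Real.div_rpow hc.le h2.le, Real.rpow_neg h2.le β, div_eq_mul_inv, inv_inv, mul_comm]
    calc a ^ (-β) * b ^ (-β) * c ^ β ≤ a ^ (-β) * (2 ^ β * c ^ (-β)) * c ^ β := by
          rw [hce] at hb'
          have h1 : (0:ℝ) ≤ a ^ (-β) := by positivity
          have h3 : (0:ℝ) < c ^ β := Real.rpow_pos_of_pos hc β
          have := mul_le_mul_of_nonneg_left hb' h1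
          nlinarith
      _ = 2 ^ β * a ^ (-β) * (c ^ (-β) * c ^ β) := by ring
      _ = 2 ^ β * a ^ (-β) := by rw [hcc, mul_one]
      _ ≤ 2 ^ β * (a ^ (-β) + b ^ (-β)) := by
          have : (0:ℝ) < 2 ^ β := Real.rpow_pos_of_pos h2 β
          nlinarith [Real.rpow_pos_of_pos hb (-β)]
  · have hac : c / 2 ≤ a := by linarith
    have ha' : a ^ (-β) ≤ (c / 2) ^ (-β) :=
      Real.rpow_le_rpow_of_nonpos (by positivity) hac (by linarith)
    have hce : (c / 2) ^ (-β) = 2 ^ β * c ^ (-β) := by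
      rw [Real.div_rpow hc.le h2.le, Real.rpow_neg h2.le β, div_eq_mul_inv, inv_inv, mul_comm]
    calc a ^ (-β) * b ^ (-β) * c ^ β ≤ (2 ^ β * c ^ (-β)) * b ^ (-β) * c ^ β := by
          rw [hce] at ha'
          have h1 : (0:ℝ) ≤ b ^ (-β) := by positivity
          have h3 : (0:ℝ) < c ^ β := Real.rpow_pos_of_pos hc β
          have := mul_le_mul_of_nonneg_right ha' h1
          nlinarith
      _ = 2 ^ β * b ^ (-β) * (c ^ (-β) * c ^ β) := by ring
      _ = 2 ^ β * b ^ (-β) := by rw [hcc, mul_one]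
      _ ≤ 2 ^ β * (a ^ (-β) + b ^ (-β)) := by
          have : (0:ℝ) < 2 ^ β := Real.rpow_pos_of_pos h2 β
          nlinarith [Real.rpow_pos_of_pos ha (-β)]

lemma f_bounds {d : ℕ} (β c₁ c₂ : ℝ)
    (η : EuclideanSpace ℝ (Fin d) → ℝ)
    (hη : ∀ x : EuclideanSpace ℝ (Fin d), ‖x‖ = 1 → η x ∈ Set.Icc c₁ c₂)
    (f : EuclideanSpace ℝ (Fin d) → ℝ)
    (hf : ∀ x : EuclideanSpace ℝ (Fin d), x ≠ 0 →
      f x = η ((1 / ‖x‖) • x) * ‖x‖ ^ (-β))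
    (z : EuclideanSpace ℝ (Fin d)) (hz : z ≠ 0) :
    c₁ * ‖z‖ ^ (-β) ≤ f z ∧ f z ≤ c₂ * ‖z‖ ^ (-β) := by
  have hzn : (0:ℝ) < ‖z‖ := norm_pos_iff.2 hz
  have hu : ‖(1 / ‖z‖) • z‖ = 1 := by
    rw [norm_smul, Real.norm_eq_abs, abs_of_pos (by positivity : (0:ℝ) < 1 / ‖z‖)]
    field_simp
  have hmem := hη _ hu
  have hp : (0:ℝ) < ‖z‖ ^ (-β) := Real.rpow_pos_of_pos hzn _
  rw [hf z hz]
  exact ⟨mul_le_mul_of_nonneg_right hmem.1 hp.le,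
    mul_le_mul_of_nonneg_right hmem.2 hp.le⟩

lemma ratio_bound {d : ℕ} (β c₁ c₂ : ℝ) (hβ : 0 < β) (hc₁ : 0 < c₁) (hc : c₁ ≤ c₂)
    (η : EuclideanSpace ℝ (Fin d) → ℝ)
    (hη : ∀ x : EuclideanSpace ℝ (Fin d), ‖x‖ = 1 → η x ∈ Set.Icc c₁ c₂)
    (f : EuclideanSpace ℝ (Fin d) → ℝ)
    (hf : ∀ x : EuclideanSpace ℝ (Fin d), x ≠ 0 →
      f x = η ((1 / ‖x‖) • x) * ‖x‖ ^ (-β))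
    (x y : EuclideanSpace ℝ (Fin d)) (hx : 1 ≤ ‖x‖)
    (hxy : 0 < ‖x - y‖) (hy : 0 < ‖y‖) :
    f (x - y) * f y / f x ≤
      (2 ^ β * (c₂ ^ 2 / c₁)) * (‖x - y‖ ^ (-β) + ‖y‖ ^ (-β)) := by
  set a := ‖x - y‖
  set b := ‖y‖
  set c := ‖x‖
  have hcpos : (0:ℝ) < c := lt_of_lt_of_le one_pos hx
  have hx0 : x ≠ 0 := norm_pos_iff.1 hcpos
  have hy0 : y ≠ 0 := norm_pos_iff.1 hy
  have hxy0 : x - y ≠ 0 := norm_pos_iff.1 hxy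
  have habc : c ≤ a + b := by
    have : x = (x - y) + y := by abel
    calc c = ‖(x - y) + y‖ := by rw [← this]
      _ ≤ a + b := norm_add_le _ _
  obtain ⟨h1l, h1u⟩ := f_bounds β c₁ c₂ η hη f hf (x - y) hxy0
  obtain ⟨h2l, h2u⟩ := f_bounds β c₁ c₂ η hη f hf y hy0
  obtain ⟨h3l, h3u⟩ := f_bounds β c₁ c₂ η hη f hf x hx0
  have hca : (0:ℝ) < a ^ (-β) := Real.rpow_pos_of_pos hxy _
  have hcb : (0:ℝ) < b ^ (-β) := Real.rpow_pos_of_pos hy _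
  have hcc : (0:ℝ) < c ^ (-β) := Real.rpow_pos_of_pos hcpos _
  have hc₂ : (0:ℝ) < c₂ := lt_of_lt_of_le hc₁ hc
  have hfx : (0:ℝ) < f x := lt_of_lt_of_le (by positivity) h3l
  have hnum : f (x - y) * f y ≤ (c₂ * a ^ (-β)) * (c₂ * b ^ (-β)) := by
    have hf1 : (0:ℝ) ≤ f (x - y) := le_trans (by positivity) h1l
    have hf2 : (0:ℝ) ≤ f y := le_trans (by positivity) h2l
    exact mul_le_mul h1u h2u hf2 (by positivity)
  have step1 : f (x - y) * f y / f x ≤ (c₂ * a ^ (-β)) * (c₂ * b ^ (-β)) / (c₁ * c ^ (-β)) :=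
    div_le_div₀ (by positivity) hnum (by positivity) h3l
  refine step1.trans ?_
  have hrw : (c₂ * a ^ (-β)) * (c₂ * b ^ (-β)) / (c₁ * c ^ (-β)) =
      (c₂ ^ 2 / c₁) * (a ^ (-β) * b ^ (-β) * c ^ β) := by
    have hone : c ^ β * c ^ (-β) = 1 := by
      rw [← Real.rpow_add hcpos, add_neg_cancel, Real.rpow_zero]
    rw [div_eq_iff (by positivity)]
    field_simp
    linear_combination (-1 : ℝ) * hone
  rw [hrw]
  have := key_ineq β hβ a b c hxy hy hcpos habc
  calc (c₂ ^ 2 / c₁) * (a ^ (-β) * b ^ (-β) * c ^ β)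
      ≤ (c₂ ^ 2 / c₁) * (2 ^ β * (a ^ (-β) + b ^ (-β))) :=
        mul_le_mul_of_nonneg_left this (by positivity)
    _ = (2 ^ β * (c₂ ^ 2 / c₁)) * (a ^ (-β) + b ^ (-β)) := by ring

lemma main_bound {d : ℕ} (β c₁ c₂ : ℝ) (hβ : 0 < β) (hc₁ : 0 < c₁) (hc : c₁ ≤ c₂)
    (η : EuclideanSpace ℝ (Fin d) → ℝ)
    (hη : ∀ x : EuclideanSpace ℝ (Fin d), ‖x‖ = 1 → η x ∈ Set.Icc c₁ c₂)
    (f : EuclideanSpace ℝ (Fin d) → ℝ)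
    (hf : ∀ x : EuclideanSpace ℝ (Fin d), x ≠ 0 →
      f x = η ((1 / ‖x‖) • x) * ‖x‖ ^ (-β))
    (r : ℝ) (hr : 1 < r) (x : EuclideanSpace ℝ (Fin d)) (hx : 1 ≤ ‖x‖) :
    (∫⁻ y in {y : EuclideanSpace ℝ (Fin d) | r < ‖x - y‖ ∧ r < ‖y‖},
        ENNReal.ofReal (f (x - y) * f y / f x)) ≤
      ENNReal.ofReal ((2 : ℝ) ^ (1 + β) * (c₂ ^ 2 / c₁)) *
        ∫⁻ y in {y : EuclideanSpace ℝ (Fin d) | r < ‖y‖},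
          ENNReal.ofReal (‖y‖ ^ (-β)) := by
  have hc₂ : (0:ℝ) < c₂ := lt_of_lt_of_le hc₁ hc
  set C : ℝ := 2 ^ β * (c₂ ^ 2 / c₁) with hCdef
  have hC : 0 ≤ C := by positivity
  have hmx : Measurable fun y : EuclideanSpace ℝ (Fin d) => ‖x - y‖ :=
    (measurable_const.sub measurable_id).norm
  have hS1m : MeasurableSet {y : EuclideanSpace ℝ (Fin d) | r < ‖x - y‖} :=
    measurableSet_lt measurable_const hmx
  have hS2m : MeasurableSet {y : EuclideanSpace ℝ (Fin d) | r < ‖y‖} :=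
    measurableSet_lt measurable_const measurable_norm
  set g1 : EuclideanSpace ℝ (Fin d) → ℝ≥0∞ := fun y => ENNReal.ofReal (‖x - y‖ ^ (-β))
    with hg1def
  set g2 : EuclideanSpace ℝ (Fin d) → ℝ≥0∞ := fun y => ENNReal.ofReal (‖y‖ ^ (-β))
    with hg2def
  have hg1m : Measurable g1 := ENNReal.measurable_ofReal.comp (hmx.pow_const _)
  have hg2m : Measurable g2 := ENNReal.measurable_ofReal.comp (measurable_norm.pow_const _)
  set S : Set (EuclideanSpace ℝ (Fin d)) := {y | r < ‖x - y‖ ∧ r < ‖y‖} with hSdef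
  have step1 : (∫⁻ y in S, ENNReal.ofReal (f (x - y) * f y / f x)) ≤
      ∫⁻ y in S, ENNReal.ofReal C * (g1 y + g2 y) := by
    refine setLIntegral_mono ((hg1m.add hg2m).const_mul _) fun y hy => ?_
    obtain ⟨hy1, hy2⟩ := hy
    have h1 : (0:ℝ) < ‖x - y‖ := lt_trans (by linarith) hy1
    have h2 : (0:ℝ) < ‖y‖ := lt_trans (by linarith) hy2
    have := ratio_bound β c₁ c₂ hβ hc₁ hc η hη f hf x y hx h1 h2
    calc ENNReal.ofReal (f (x - y) * f y / f x)
        ≤ ENNReal.ofReal (C * (‖x - y‖ ^ (-β) + ‖y‖ ^ (-β))) := ENNReal.ofReal_le_ofReal this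
      _ = ENNReal.ofReal C * (g1 y + g2 y) := by
          rw [ENNReal.ofReal_mul hC,
            ENNReal.ofReal_add (Real.rpow_nonneg (norm_nonneg _) _)
              (Real.rpow_nonneg (norm_nonneg _) _)]
  have step2 : (∫⁻ y in S, ENNReal.ofReal C * (g1 y + g2 y)) =
      ENNReal.ofReal C * ((∫⁻ y in S, g1 y) + ∫⁻ y in S, g2 y) := by
    rw [lintegral_const_mul _ (show Measurable fun y => g1 y + g2 y from hg1m.add hg2m), lintegral_add_left hg1m]
  have step3a : (∫⁻ y in S, g1 y) ≤ ∫⁻ y in {y : EuclideanSpace ℝ (Fin d) | r < ‖y‖}, g2 y := by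
    refine le_trans (lintegral_mono_set fun y hy => hy.1) ?_
    have hkey : (∫⁻ y in {y : EuclideanSpace ℝ (Fin d) | r < ‖x - y‖}, g1 y) =
        ∫⁻ z in {z : EuclideanSpace ℝ (Fin d) | r < ‖z‖}, g2 z := by
      have hFm : Measurable (Set.indicator {z : EuclideanSpace ℝ (Fin d) | r < ‖z‖} g2) :=
        hg2m.indicator hS2m
      calc (∫⁻ y in {y : EuclideanSpace ℝ (Fin d) | r < ‖x - y‖}, g1 y)
          = ∫⁻ y, Set.indicator {z : EuclideanSpace ℝ (Fin d) | r < ‖z‖} g2 (x - y) := by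
            rw [← lintegral_indicator hS1m]
            refine lintegral_congr fun y => ?_
            by_cases h : r < ‖x - y‖ <;>
              simp [Set.indicator, h, hg1def, hg2def]
        _ = ∫⁻ z, Set.indicator {z : EuclideanSpace ℝ (Fin d) | r < ‖z‖} g2 z :=
            (Measure.measurePreserving_sub_left volume x).lintegral_comp hFm
        _ = ∫⁻ z in {z : EuclideanSpace ℝ (Fin d) | r < ‖z‖}, g2 z :=
            lintegral_indicator hS2m _
    exact hkey.le
  have step3b : (∫⁻ y in S, g2 y) ≤ ∫⁻ y in {y : EuclideanSpace ℝ (Fin d) | r < ‖y‖}, g2 y :=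
    lintegral_mono_set fun y hy => hy.2
  set T : ℝ≥0∞ := ∫⁻ y in {y : EuclideanSpace ℝ (Fin d) | r < ‖y‖}, g2 y with hTdef
  calc (∫⁻ y in S, ENNReal.ofReal (f (x - y) * f y / f x))
      ≤ ENNReal.ofReal C * ((∫⁻ y in S, g1 y) + ∫⁻ y in S, g2 y) := step1.trans step2.le
    _ ≤ ENNReal.ofReal C * (T + T) := by
        exact mul_le_mul_right (add_le_add step3a step3b) _
    _ = ENNReal.ofReal ((2 : ℝ) ^ (1 + β) * (c₂ ^ 2 / c₁)) * T := by
        have h2C : (2 : ℝ) ^ (1 + β) * (c₂ ^ 2 / c₁) = 2 * C := by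
          rw [hCdef, Real.rpow_add two_pos, Real.rpow_one]; ring
        rw [h2C, ENNReal.ofReal_mul (by norm_num : (0:ℝ) ≤ 2), ← two_mul,
          ENNReal.ofReal_ofNat]
        ring

lemma tail_fin {d : ℕ} (β : ℝ) (hβ : (d : ℝ) < β) :
    (∫⁻ y in {y : EuclideanSpace ℝ (Fin d) | 1 < ‖y‖},
      ENNReal.ofReal (‖y‖ ^ (-β))) < ⊤ := by
  have hβ0 : 0 < β := lt_of_le_of_lt (Nat.cast_nonneg d) hβ
  have hfr : (Module.finrank ℝ (EuclideanSpace ℝ (Fin d)) : ℝ) < β := by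
    rw [finrank_euclideanSpace_fin]; exact hβ
  have hlt : (∫⁻ y : EuclideanSpace ℝ (Fin d), ENNReal.ofReal ((1 + ‖y‖) ^ (-β))) < ⊤ :=
    finite_integral_one_add_norm hfr
  have hptwise : ∀ y : EuclideanSpace ℝ (Fin d), y ∈ {y : EuclideanSpace ℝ (Fin d) | 1 < ‖y‖} →
      ENNReal.ofReal (‖y‖ ^ (-β)) ≤
        ENNReal.ofReal (2 ^ β) * ENNReal.ofReal ((1 + ‖y‖) ^ (-β)) := by
    intro y hy
    have hy1 : (1:ℝ) < ‖y‖ := hy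
    have hypos : (0:ℝ) < ‖y‖ := by linarith
    rw [← ENNReal.ofReal_mul (by positivity)]
    refine ENNReal.ofReal_le_ofReal ?_
    have h1 : ((2:ℝ) * ‖y‖) ^ (-β) ≤ (1 + ‖y‖) ^ (-β) :=
      Real.rpow_le_rpow_of_nonpos (by positivity) (by linarith) (by linarith)
    have h2 : ((2:ℝ) * ‖y‖) ^ (-β) = 2 ^ (-β) * ‖y‖ ^ (-β) :=
      Real.mul_rpow (by norm_num) (norm_nonneg _)
    have h3 : (2:ℝ) ^ β * (2:ℝ) ^ (-β) = 1 := by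
      rw [← Real.rpow_add two_pos, add_neg_cancel, Real.rpow_zero]
    calc ‖y‖ ^ (-β) = 2 ^ β * (2 ^ (-β) * ‖y‖ ^ (-β)) := by
          rw [← mul_assoc, h3, one_mul]
      _ = 2 ^ β * ((2:ℝ) * ‖y‖) ^ (-β) := by rw [h2]
      _ ≤ 2 ^ β * (1 + ‖y‖) ^ (-β) := by
          have : (0:ℝ) < 2 ^ β := Real.rpow_pos_of_pos two_pos β
          rw [h2]
          rw [← h2]
          exact mul_le_mul_of_nonneg_left h1 this.le
  calc (∫⁻ y in {y : EuclideanSpace ℝ (Fin d) | 1 < ‖y‖}, ENNReal.ofReal (‖y‖ ^ (-β)))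
      ≤ ∫⁻ y in {y : EuclideanSpace ℝ (Fin d) | 1 < ‖y‖},
          ENNReal.ofReal (2 ^ β) * ENNReal.ofReal ((1 + ‖y‖) ^ (-β)) :=
        setLIntegral_mono
          ((ENNReal.measurable_ofReal.comp
            ((measurable_const.add measurable_norm).pow_const _)).const_mul _) hptwise
    _ = ENNReal.ofReal (2 ^ β) *
          ∫⁻ y in {y : EuclideanSpace ℝ (Fin d) | 1 < ‖y‖},
            ENNReal.ofReal ((1 + ‖y‖) ^ (-β)) :=
        lintegral_const_mul _ (ENNReal.measurable_ofReal.comp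
          ((measurable_const.add measurable_norm).pow_const _))
    _ ≤ ENNReal.ofReal (2 ^ β) *
          ∫⁻ y : EuclideanSpace ℝ (Fin d), ENNReal.ofReal ((1 + ‖y‖) ^ (-β)) :=
        mul_le_mul_right (setLIntegral_le_lintegral _ _) _
    _ < ⊤ := ENNReal.mul_lt_top ENNReal.ofReal_lt_top hlt

lemma tail_tendsto {d : ℕ} (β : ℝ) (hβ : (d : ℝ) < β) :
    Tendsto (fun r : ℝ => ∫⁻ y in {y : EuclideanSpace ℝ (Fin d) | r < ‖y‖},
        ENNReal.ofReal (‖y‖ ^ (-β))) atTop (nhds 0) := by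
  set g : EuclideanSpace ℝ (Fin d) → ℝ≥0∞ := fun y => ENNReal.ofReal (‖y‖ ^ (-β)) with hg
  have hgm : Measurable g := ENNReal.measurable_ofReal.comp (measurable_norm.pow_const _)
  set ν : Measure (EuclideanSpace ℝ (Fin d)) := volume.withDensity g with hν
  have hsm : ∀ r : ℝ, MeasurableSet {y : EuclideanSpace ℝ (Fin d) | r < ‖y‖} := fun r =>
    measurableSet_lt measurable_const measurable_norm
  have happ : ∀ r : ℝ, ν {y : EuclideanSpace ℝ (Fin d) | r < ‖y‖} =
      ∫⁻ y in {y : EuclideanSpace ℝ (Fin d) | r < ‖y‖}, g y := fun r =>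
    withDensity_apply g (hsm r)
  have hanti : Antitone fun r : ℝ => {y : EuclideanSpace ℝ (Fin d) | r < ‖y‖} := by
    intro r₁ r₂ h y hy
    exact lt_of_le_of_lt h hy
  have hempty : ⋂ r : ℝ, {y : EuclideanSpace ℝ (Fin d) | r < ‖y‖} = ∅ := by
    ext y
    simp only [Set.mem_iInter, Set.mem_setOf_eq, Set.mem_empty_iff_false, iff_false, not_forall,
      not_lt]
    exact ⟨‖y‖, le_refl _⟩
  have hfin : ∃ r : ℝ, ν {y : EuclideanSpace ℝ (Fin d) | r < ‖y‖} ≠ ⊤ := by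
    refine ⟨1, ?_⟩
    rw [happ 1]
    exact (tail_fin β hβ).ne
  have := tendsto_measure_iInter_atTop (μ := ν)
    (fun r => (hsm r).nullMeasurableSet) hanti hfin
  rw [hempty] at this
  simp only [measure_empty] at this
  have heq : (fun r : ℝ => ∫⁻ y in {y : EuclideanSpace ℝ (Fin d) | r < ‖y‖}, g y) =
      (ν ∘ fun r : ℝ => {y : EuclideanSpace ℝ (Fin d) | r < ‖y‖}) := by
    funext r
    exact (happ r).symm
  rw [hg] at heq ⊢
  rw [heq]
  exact this

theorem stmt3 (d : ℕ) (hd : 1 ≤ d) (β : ℝ) (hβ : (d : ℝ) < β)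
    (c₁ c₂ : ℝ) (hc₁ : 0 < c₁) (hc : c₁ ≤ c₂)
    (η : EuclideanSpace ℝ (Fin d) → ℝ)
    (hη : ∀ x : EuclideanSpace ℝ (Fin d), ‖x‖ = 1 → η x ∈ Set.Icc c₁ c₂)
    (f : EuclideanSpace ℝ (Fin d) → ℝ) (hfm : Measurable f)
    (hf : ∀ x : EuclideanSpace ℝ (Fin d), x ≠ 0 →
      f x = η ((1 / ‖x‖) • x) * ‖x‖ ^ (-β)) :
    (∀ r : ℝ, 1 < r → ∀ x : EuclideanSpace ℝ (Fin d), 1 ≤ ‖x‖ →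
      (∫⁻ y in {y : EuclideanSpace ℝ (Fin d) | r < ‖x - y‖ ∧ r < ‖y‖},
          ENNReal.ofReal (f (x - y) * f y / f x)) ≤
        ENNReal.ofReal ((2 : ℝ) ^ (1 + β) * (c₂ ^ 2 / c₁)) *
          ∫⁻ y in {y : EuclideanSpace ℝ (Fin d) | r < ‖y‖},
            ENNReal.ofReal (‖y‖ ^ (-β))) ∧
    Tendsto (fun r : ℝ =>
        ⨆ x : {x : EuclideanSpace ℝ (Fin d) // 1 ≤ ‖x‖},
          ∫⁻ y in {y : EuclideanSpace ℝ (Fin d) | r < ‖(x : EuclideanSpace ℝ (Fin d)) - y‖ ∧ r < ‖y‖},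
            ENNReal.ofReal (f ((x : EuclideanSpace ℝ (Fin d)) - y) * f y / f (x : EuclideanSpace ℝ (Fin d))))
      atTop (nhds 0) := by
  
  have hβ0 : 0 < β := lt_of_le_of_lt (Nat.cast_nonneg d) hβ
  refine ⟨fun r hr x hx => main_bound β c₁ c₂ hβ0 hc₁ hc η hη f hf r hr x hx, ?_⟩
  have hT := tail_tendsto β hβ
  have hCT : Tendsto (fun r : ℝ => ENNReal.ofReal ((2 : ℝ) ^ (1 + β) * (c₂ ^ 2 / c₁)) *
      ∫⁻ y in {y : EuclideanSpace ℝ (Fin d) | r < ‖y‖}, ENNReal.ofReal (‖y‖ ^ (-β)))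
      atTop (nhds 0) := by
    have := ENNReal.Tendsto.const_mul (a := ENNReal.ofReal ((2 : ℝ) ^ (1 + β) * (c₂ ^ 2 / c₁)))
      hT (Or.inr ENNReal.ofReal_ne_top)
    simpa using this
  refine tendsto_of_tendsto_of_tendsto_of_le_of_le' tendsto_const_nhds hCT
    (Eventually.of_forall fun r => zero_le) ?_
  filter_upwards [eventually_gt_atTop (1 : ℝ)] with r hr
  exact iSup_le fun x => main_bound β c₁ c₂ hβ0 hc₁ hc η hη f hf r hr x x.2
end

section
/- Let f : ℝ^d → [0,∞) be integrable and satisfy f(x) ≍ g(|x|) for |x| ≥ A (with A ≥ 1, g decreasing and positive, comparability constant c). Then for |x| ≥ A and r ≥ A: ∫_{|x-y|>r, |y|>r} f(x-y)f(y)/f(x) dy ≤ c⁶ ∫_{||x|θ - y|>r, |y|>r} f(|x|θ - y)f(y)/f(|x|θ) dy for any fixed unit vector θ; consequently K^A_f(r) ≤ c⁶ sup_{t≥A} (1/f(tθ)) ∫_{|tθ-y|>r, |y|>r} f(tθ-y)f(y) dy. -/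
open Filter MeasureTheory
open scoped ENNReal

/-- `KA d A f r = sup_{‖x‖ ≥ A} ∫_{‖x-y‖ > r, ‖y‖ > r} f(x-y) f(y) / f(x) dy`,
valued in `ℝ≥0∞`. -/
noncomputable def KA (d : ℕ) (A : ℝ) (f : EuclideanSpace ℝ (Fin d) → ℝ) (r : ℝ) : ℝ≥0∞ :=
  ⨆ x : {x : EuclideanSpace ℝ (Fin d) // A ≤ ‖x‖},
    ∫⁻ y in {y : EuclideanSpace ℝ (Fin d) | r < ‖(x : EuclideanSpace ℝ (Fin d)) - y‖ ∧ r < ‖y‖},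
      ENNReal.ofReal (f ((x : EuclideanSpace ℝ (Fin d)) - y) * f y / f (x : EuclideanSpace ℝ (Fin d)))

theorem stmt11 (d : ℕ) (f : EuclideanSpace ℝ (Fin d) → ℝ)
    (hfm : Measurable f) (hf0 : ∀ x, 0 ≤ f x) (hfint : Integrable f)
    (A c : ℝ) (hA : 1 ≤ A) (hc : 1 ≤ c)
    (g : ℝ → ℝ) (hgpos : ∀ r : ℝ, A ≤ r → 0 < g r)
    (hgdec : ∀ s t : ℝ, A ≤ s → s ≤ t → g t ≤ g s)
    (hcomp : ∀ x : EuclideanSpace ℝ (Fin d), A ≤ ‖x‖ →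
      (1 / c) * g ‖x‖ ≤ f x ∧ f x ≤ c * g ‖x‖)
    (θ : EuclideanSpace ℝ (Fin d)) (hθ : ‖θ‖ = 1) :
    (∀ x : EuclideanSpace ℝ (Fin d), A ≤ ‖x‖ → ∀ r : ℝ, A ≤ r →
      (∫⁻ y in {y : EuclideanSpace ℝ (Fin d) | r < ‖x - y‖ ∧ r < ‖y‖},
          ENNReal.ofReal (f (x - y) * f y / f x)) ≤
        ENNReal.ofReal (c ^ 6) *
          ∫⁻ y in {y : EuclideanSpace ℝ (Fin d) | r < ‖‖x‖ • θ - y‖ ∧ r < ‖y‖},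
            ENNReal.ofReal (f (‖x‖ • θ - y) * f y / f (‖x‖ • θ))) ∧
    (∀ r : ℝ, A ≤ r →
      KA d A f r ≤ ENNReal.ofReal (c ^ 6) *
        ⨆ t : {t : ℝ // A ≤ t},
          (∫⁻ y in {y : EuclideanSpace ℝ (Fin d) | r < ‖(t : ℝ) • θ - y‖ ∧ r < ‖y‖},
              ENNReal.ofReal (f ((t : ℝ) • θ - y) * f y)) /
            ENNReal.ofReal (f ((t : ℝ) • θ))) := by
  have hc0 : (0:ℝ) < c := lt_of_lt_of_le one_pos hc
  have hgle : ∀ z : EuclideanSpace ℝ (Fin d), A ≤ ‖z‖ → g ‖z‖ ≤ c * f z := by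
    intro z hz
    have h := (hcomp z hz).1
    calc g ‖z‖ = c * ((1 / c) * g ‖z‖) := by field_simp
    _ ≤ c * f z := mul_le_mul_of_nonneg_left h hc0.le
  have hfpos : ∀ z : EuclideanSpace ℝ (Fin d), A ≤ ‖z‖ → 0 < f z := by
    intro z hz
    have h := (hcomp z hz).1
    have hg := hgpos ‖z‖ hz
    have : 0 < (1 / c) * g ‖z‖ := by positivity
    linarith
  have key : ∀ x : EuclideanSpace ℝ (Fin d), A ≤ ‖x‖ → ∀ r : ℝ, A ≤ r →
      (∫⁻ y in {y : EuclideanSpace ℝ (Fin d) | r < ‖x - y‖ ∧ r < ‖y‖},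
          ENNReal.ofReal (f (x - y) * f y / f x)) ≤
        ENNReal.ofReal (c ^ 6) *
          ∫⁻ y in {y : EuclideanSpace ℝ (Fin d) | r < ‖‖x‖ • θ - y‖ ∧ r < ‖y‖},
            ENNReal.ofReal (f (‖x‖ • θ - y) * f y / f (‖x‖ • θ)) := by
    intro x hx r hr
    set x' : EuclideanSpace ℝ (Fin d) := ‖x‖ • θ with hx'def
    have hxA : (0:ℝ) < ‖x‖ := lt_of_lt_of_le (lt_of_lt_of_le one_pos hA) hx
    have hnx' : ‖x'‖ = ‖x‖ := by
      rw [hx'def, norm_smul, hθ, mul_one, Real.norm_eq_abs, abs_of_pos hxA]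
    have hx'A : A ≤ ‖x'‖ := hnx' ▸ hx
    have hgx : 0 < g ‖x‖ := hgpos _ hx
    have hfx : 0 < f x := hfpos x hx
    have hfx' : 0 < f x' := hfpos x' hx'A
    set p : ℝ≥0∞ := ENNReal.ofReal (g ‖x‖) with hpdef
    have hp0 : p ≠ 0 := (ENNReal.ofReal_pos.mpr hgx).ne'
    have hpt : p ≠ ⊤ := ENNReal.ofReal_ne_top
    have hmeas : ∀ z : EuclideanSpace ℝ (Fin d),
        MeasurableSet {y : EuclideanSpace ℝ (Fin d) | r < ‖z - y‖ ∧ r < ‖y‖} := fun z =>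
      ((isOpen_lt continuous_const (continuous_const.sub continuous_id).norm).and
        (isOpen_lt continuous_const continuous_norm)).measurableSet
    -- rotation invariance
    set R : EuclideanSpace ℝ (Fin d) ≃ₗᵢ[ℝ] EuclideanSpace ℝ (Fin d) :=
      Submodule.reflection (ℝ ∙ (x - x'))ᗮ with hRdef
    have hRx : R x = x' := Submodule.reflection_sub (by rw [hnx'])
    have hnormRy : ∀ y : EuclideanSpace ℝ (Fin d), ‖x' - R y‖ = ‖x - y‖ := by
      intro y; rw [← hRx, ← map_sub, R.norm_map]
    have hset : R ⁻¹' {y : EuclideanSpace ℝ (Fin d) | r < ‖x' - y‖ ∧ r < ‖y‖}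
        = {y : EuclideanSpace ℝ (Fin d) | r < ‖x - y‖ ∧ r < ‖y‖} := by
      ext y; simp only [Set.mem_preimage, Set.mem_setOf_eq, hnormRy, R.norm_map]
    have hrot : (∫⁻ y in {y : EuclideanSpace ℝ (Fin d) | r < ‖x' - y‖ ∧ r < ‖y‖},
          ENNReal.ofReal (c ^ 3 * (g ‖x' - y‖ * g ‖y‖)))
        = ∫⁻ y in {y : EuclideanSpace ℝ (Fin d) | r < ‖x - y‖ ∧ r < ‖y‖},
          ENNReal.ofReal (c ^ 3 * (g ‖x - y‖ * g ‖y‖)) := by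
      rw [← R.measurePreserving.setLIntegral_comp_preimage_emb
          R.toHomeomorph.measurableEmbedding
          (fun y => ENNReal.ofReal (c ^ 3 * (g ‖x' - y‖ * g ‖y‖)))
          {y : EuclideanSpace ℝ (Fin d) | r < ‖x' - y‖ ∧ r < ‖y‖}, hset]
      exact lintegral_congr fun y => by rw [hnormRy, R.norm_map]
    -- pointwise bound on the x-side
    have ptA : ∀ y ∈ {y : EuclideanSpace ℝ (Fin d) | r < ‖x - y‖ ∧ r < ‖y‖},
        p * ENNReal.ofReal (f (x - y) * f y / f x)
          ≤ ENNReal.ofReal (c ^ 3 * (g ‖x - y‖ * g ‖y‖)) := by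
      rintro y ⟨h1, h2⟩
      have ha : A ≤ ‖x - y‖ := le_of_lt (lt_of_le_of_lt hr h1)
      have hb : A ≤ ‖y‖ := le_of_lt (lt_of_le_of_lt hr h2)
      rw [hpdef, ← ENNReal.ofReal_mul hgx.le]
      apply ENNReal.ofReal_le_ofReal
      have hfa := (hcomp _ ha).2
      have hfb := (hcomp _ hb).2
      have hgc : g ‖x‖ ≤ c * f x := hgle x hx
      have hga : 0 < g ‖x - y‖ := hgpos _ ha
      have hgb : 0 < g ‖y‖ := hgpos _ hb
      have hF : f (x - y) * f y ≤ (c * g ‖x - y‖) * (c * g ‖y‖) :=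
        mul_le_mul hfa hfb (hf0 y) (by positivity)
      rw [← mul_div_assoc, div_le_iff₀ hfx]
      calc g ‖x‖ * (f (x - y) * f y)
          ≤ (c * f x) * ((c * g ‖x - y‖) * (c * g ‖y‖)) :=
            mul_le_mul hgc hF (mul_nonneg (hf0 _) (hf0 _)) (by positivity)
      _ = c ^ 3 * (g ‖x - y‖ * g ‖y‖) * f x := by ring
    -- pointwise bound on the x'-side
    have ptB : ∀ y ∈ {y : EuclideanSpace ℝ (Fin d) | r < ‖x' - y‖ ∧ r < ‖y‖},
        ENNReal.ofReal (c ^ 3 * (g ‖x' - y‖ * g ‖y‖))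
          ≤ (p * ENNReal.ofReal (c ^ 6)) * ENNReal.ofReal (f (x' - y) * f y / f x') := by
      rintro y ⟨h1, h2⟩
      have ha : A ≤ ‖x' - y‖ := le_of_lt (lt_of_le_of_lt hr h1)
      have hb : A ≤ ‖y‖ := le_of_lt (lt_of_le_of_lt hr h2)
      rw [hpdef, ← ENNReal.ofReal_mul hgx.le, ← ENNReal.ofReal_mul (by positivity :
        (0:ℝ) ≤ g ‖x‖ * c ^ 6)]
      apply ENNReal.ofReal_le_ofReal
      have hga : g ‖x' - y‖ ≤ c * f (x' - y) := hgle _ ha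
      have hgb : g ‖y‖ ≤ c * f y := hgle y hb
      have hfx'le : f x' ≤ c * g ‖x‖ := by
        have h := (hcomp x' hx'A).2; rwa [hnx'] at h
      have hrw : g ‖x‖ * c ^ 6 * (f (x' - y) * f y / f x')
          = g ‖x‖ * c ^ 6 * (f (x' - y) * f y) / f x' := by ring
      rw [hrw, le_div_iff₀ hfx']
      have hG : g ‖x' - y‖ * g ‖y‖ ≤ (c * f (x' - y)) * (c * f y) :=
        mul_le_mul hga hgb (hgpos _ hb).le
          (mul_nonneg hc0.le (hf0 _))
      calc c ^ 3 * (g ‖x' - y‖ * g ‖y‖) * f x'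
          ≤ c ^ 3 * ((c * f (x' - y)) * (c * f y)) * (c * g ‖x‖) := by
            apply mul_le_mul (mul_le_mul_of_nonneg_left hG (by positivity)) hfx'le hfx'.le
            have := hf0 (x' - y); have := hf0 y; positivity
      _ = g ‖x‖ * c ^ 6 * (f (x' - y) * f y) := by ring
    -- main chain
    have main : p * (∫⁻ y in {y : EuclideanSpace ℝ (Fin d) | r < ‖x - y‖ ∧ r < ‖y‖},
          ENNReal.ofReal (f (x - y) * f y / f x))
        ≤ p * (ENNReal.ofReal (c ^ 6) *
          ∫⁻ y in {y : EuclideanSpace ℝ (Fin d) | r < ‖x' - y‖ ∧ r < ‖y‖},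
            ENNReal.ofReal (f (x' - y) * f y / f x')) := by
      calc p * (∫⁻ y in {y : EuclideanSpace ℝ (Fin d) | r < ‖x - y‖ ∧ r < ‖y‖},
            ENNReal.ofReal (f (x - y) * f y / f x))
          = ∫⁻ y in {y : EuclideanSpace ℝ (Fin d) | r < ‖x - y‖ ∧ r < ‖y‖},
            p * ENNReal.ofReal (f (x - y) * f y / f x) :=
            (lintegral_const_mul' p _ hpt).symm
      _ ≤ ∫⁻ y in {y : EuclideanSpace ℝ (Fin d) | r < ‖x - y‖ ∧ r < ‖y‖},
            ENNReal.ofReal (c ^ 3 * (g ‖x - y‖ * g ‖y‖)) :=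
            setLIntegral_mono' (hmeas x) ptA
      _ = ∫⁻ y in {y : EuclideanSpace ℝ (Fin d) | r < ‖x' - y‖ ∧ r < ‖y‖},
            ENNReal.ofReal (c ^ 3 * (g ‖x' - y‖ * g ‖y‖)) := hrot.symm
      _ ≤ ∫⁻ y in {y : EuclideanSpace ℝ (Fin d) | r < ‖x' - y‖ ∧ r < ‖y‖},
            (p * ENNReal.ofReal (c ^ 6)) * ENNReal.ofReal (f (x' - y) * f y / f x') :=
            setLIntegral_mono' (hmeas x') ptB
      _ = (p * ENNReal.ofReal (c ^ 6)) *
            ∫⁻ y in {y : EuclideanSpace ℝ (Fin d) | r < ‖x' - y‖ ∧ r < ‖y‖},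
              ENNReal.ofReal (f (x' - y) * f y / f x') :=
            lintegral_const_mul' _ _ (ENNReal.mul_ne_top hpt ENNReal.ofReal_ne_top)
      _ = p * (ENNReal.ofReal (c ^ 6) *
            ∫⁻ y in {y : EuclideanSpace ℝ (Fin d) | r < ‖x' - y‖ ∧ r < ‖y‖},
              ENNReal.ofReal (f (x' - y) * f y / f x')) := by rw [mul_assoc]
    exact (ENNReal.mul_le_mul_iff_right hp0 hpt).mp main
  refine ⟨key, fun r hr => ?_⟩
  unfold KA
  apply iSup_le
  rintro ⟨x, hx⟩
  refine (key x hx r hr).trans (mul_le_mul_right ?_ _)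
  have hxA : (0:ℝ) < ‖x‖ := lt_of_lt_of_le (lt_of_lt_of_le one_pos hA) hx
  have hnx' : ‖(‖x‖ • θ : EuclideanSpace ℝ (Fin d))‖ = ‖x‖ := by
    rw [norm_smul, hθ, mul_one, Real.norm_eq_abs, abs_of_pos hxA]
  have hfx' : 0 < f (‖x‖ • θ) := hfpos _ (by rw [hnx']; exact hx)
  have hq0 : ENNReal.ofReal (f (‖x‖ • θ)) ≠ 0 := (ENNReal.ofReal_pos.mpr hfx').ne'
  have heq : (∫⁻ y in {y : EuclideanSpace ℝ (Fin d) | r < ‖‖x‖ • θ - y‖ ∧ r < ‖y‖},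
        ENNReal.ofReal (f (‖x‖ • θ - y) * f y / f (‖x‖ • θ)))
      = (∫⁻ y in {y : EuclideanSpace ℝ (Fin d) | r < ‖‖x‖ • θ - y‖ ∧ r < ‖y‖},
          ENNReal.ofReal (f (‖x‖ • θ - y) * f y)) / ENNReal.ofReal (f (‖x‖ • θ)) := by
    simp_rw [ENNReal.ofReal_div_of_pos hfx', div_eq_mul_inv]
    exact lintegral_mul_const' _ _ (ENNReal.inv_ne_top.mpr hq0)
  rw [heq]
  exact le_iSup_of_le (⟨‖x‖, hx⟩ : {t : ℝ // A ≤ t}) le_rfl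
end

section
/- (Main Theorem) Let f ∈ L¹(ℝ^d), f ≥ 0, and suppose there exist A ≥ 1 and a decreasing function g : [A,∞) → (0,∞) with f(x) ≍ g(|x|) for |x| ≥ A. Let θ be a unit vector and γ ≥ 0, and assume: (i) f(tθ-y)/f(tθ) → e^{γ(θ·y)} as t → ∞ for every y ∈ ℝ^d; (ii) h = ∫ e^{γ(θ·y)} f(y) dy < ∞ and (f*f)(tθ)/f(tθ) → 2h as t → ∞. Then lim_{r→∞} K^A_f(r) = 0, where K^A_f(r) = sup_{|x|≥A} ∫_{|x-y|>r, |y|>r} f(x-y)f(y)/f(x) dy. -/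
open Filter MeasureTheory Set
open scoped ENNReal InnerProductSpace Topology

lemma tail_lintegral_tendsto (d : ℕ) (φ : EuclideanSpace ℝ (Fin d) → ℝ) (hφ : Integrable φ) :
    Tendsto (fun r : ℝ => ∫⁻ y in {y : EuclideanSpace ℝ (Fin d) | r < ‖y‖},
      ENNReal.ofReal (φ y)) atTop (𝓝 0) := by
  set ν := volume.withDensity (fun y => ENNReal.ofReal (φ y)) with hν
  have hmeas : ∀ r : ℝ, MeasurableSet {y : EuclideanSpace ℝ (Fin d) | r < ‖y‖} := by
    intro r
    exact measurableSet_lt measurable_const continuous_norm.measurable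
  have key : ∀ r : ℝ, (∫⁻ y in {y : EuclideanSpace ℝ (Fin d) | r < ‖y‖},
      ENNReal.ofReal (φ y)) = ν {y | r < ‖y‖} := by
    intro r
    rw [withDensity_apply' _]
  have hfin : ν univ ≠ ∞ := by
    rw [withDensity_apply' _]
    simp only [Measure.restrict_univ]
    refine ne_of_lt (lt_of_le_of_lt ?_ hφ.2)
    apply lintegral_mono; intro y
    simp only [← ofReal_norm, Real.norm_eq_abs]
    exact ENNReal.ofReal_le_ofReal (le_abs_self _)
  have hanti : Antitone (fun r : ℝ => {y : EuclideanSpace ℝ (Fin d) | r < ‖y‖}) := by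
    intro r s hrs y hy
    exact lt_of_le_of_lt hrs hy
  have hinter : (⋂ r : ℝ, {y : EuclideanSpace ℝ (Fin d) | r < ‖y‖}) = ∅ := by
    ext y
    simp only [mem_iInter, mem_setOf_eq, mem_empty_iff_false, iff_false, not_forall, not_lt]
    exact ⟨‖y‖, le_rfl⟩
  have := tendsto_measure_iInter_atTop (μ := ν)
    (fun r => (hmeas r).nullMeasurableSet) hanti
    ⟨0, ne_top_of_le_ne_top hfin (measure_mono (subset_univ _))⟩
  rw [hinter] at this
  simp only [measure_empty] at this
  simp only [key]
  exact this

lemma rot_bound (d : ℕ) (f : EuclideanSpace ℝ (Fin d) → ℝ) (hf0 : ∀ x, 0 ≤ f x)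
    (A c : ℝ) (hA : 1 ≤ A) (hc : 1 ≤ c)
    (g : ℝ → ℝ) (hgpos : ∀ r : ℝ, A ≤ r → 0 < g r)
    (hcomp : ∀ x : EuclideanSpace ℝ (Fin d), A ≤ ‖x‖ →
      (1 / c) * g ‖x‖ ≤ f x ∧ f x ≤ c * g ‖x‖)
    (θ : EuclideanSpace ℝ (Fin d)) (hθ : ‖θ‖ = 1)
    (x : EuclideanSpace ℝ (Fin d)) (r : ℝ) (hx : A ≤ ‖x‖) (hr : A ≤ r) :
    (∫⁻ y in {y : EuclideanSpace ℝ (Fin d) | r < ‖x - y‖ ∧ r < ‖y‖},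
        ENNReal.ofReal (f (x - y) * f y / f x))
      ≤ ENNReal.ofReal c ^ 6 *
        ∫⁻ y in {y : EuclideanSpace ℝ (Fin d) | r < ‖‖x‖ • θ - y‖ ∧ r < ‖y‖},
          ENNReal.ofReal (f (‖x‖ • θ - y) * f y / f (‖x‖ • θ)) := by
  have hc0 : (0:ℝ) < c := lt_of_lt_of_le one_pos hc
  set t := ‖x‖ with htdef
  set x₀ : EuclideanSpace ℝ (Fin d) := t • θ with hx₀def
  have hnx₀ : ‖x₀‖ = t := by
    rw [hx₀def, norm_smul, hθ, Real.norm_eq_abs, abs_of_nonneg (norm_nonneg x), mul_one]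
  have hx₀A : A ≤ ‖x₀‖ := by rw [hnx₀]; exact hx
  have fpos : ∀ z : EuclideanSpace ℝ (Fin d), A ≤ ‖z‖ → 0 < f z := fun z hz =>
    lt_of_lt_of_le (mul_pos (by positivity) (hgpos _ hz)) (hcomp z hz).1
  have hfx : 0 < f x := fpos x hx
  have hfx₀ : 0 < f x₀ := fpos x₀ hx₀A
  set k : ℝ≥0∞ := ENNReal.ofReal (f x) with hkdef
  set k₀ : ℝ≥0∞ := ENNReal.ofReal (f x₀) with hk₀def
  have hk0 : k ≠ 0 := by simp [hkdef, ENNReal.ofReal_pos.2 hfx, ne_of_gt]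
  have hktop : k ≠ ∞ := ENNReal.ofReal_ne_top
  have hk₀0 : k₀ ≠ 0 := by simp [hk₀def, ENNReal.ofReal_pos.2 hfx₀, ne_of_gt]
  have hk₀top : k₀ ≠ ∞ := ENNReal.ofReal_ne_top
  have hginv : ∀ s v : ℝ, (1/c) * s ≤ v → s ≤ c * v := by
    intro s v hsv
    have h' := mul_le_mul_of_nonneg_left hsv (le_of_lt hc0)
    calc s = c * ((1/c) * s) := by field_simp
      _ ≤ c * v := h'
  set g' : ℝ → ℝ := fun s => g (max s A) with hg'def
  -- set notation
  set S : EuclideanSpace ℝ (Fin d) → Set (EuclideanSpace ℝ (Fin d)) :=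
    fun z => {y | r < ‖z - y‖ ∧ r < ‖y‖} with hSdef
  set N : EuclideanSpace ℝ (Fin d) → ℝ≥0∞ :=
    fun z => ∫⁻ y in S z, ENNReal.ofReal (f (z - y)) * ENNReal.ofReal (f y) with hNdef
  set M : EuclideanSpace ℝ (Fin d) → ℝ≥0∞ :=
    fun z => ∫⁻ y in S z, ENNReal.ofReal (c * g' ‖z - y‖) * ENNReal.ofReal (c * g' ‖y‖)
    with hMdef
  -- I z = N z * k⁻¹
  have hIeq : ∀ z : EuclideanSpace ℝ (Fin d), 0 < f z →
      (∫⁻ y in S z, ENNReal.ofReal (f (z - y) * f y / f z))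
        = N z * (ENNReal.ofReal (f z))⁻¹ := by
    intro z hz
    have : ∀ y, ENNReal.ofReal (f (z - y) * f y / f z)
        = ENNReal.ofReal (f (z - y)) * ENNReal.ofReal (f y) * (ENNReal.ofReal (f z))⁻¹ := by
      intro y
      rw [ENNReal.ofReal_div_of_pos hz, ENNReal.ofReal_mul (hf0 _), div_eq_mul_inv]
    simp only [this]
    rw [hNdef]
    exact lintegral_mul_const' _ _
      (ENNReal.inv_ne_top.2 (ne_of_gt (ENNReal.ofReal_pos.2 hz)))
  -- pointwise comparability on good region
  have hgg' : ∀ s : ℝ, A ≤ s → g' s = g s := by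
    intro s hs; rw [hg'def]; simp [max_eq_left hs]
  -- N z ≤ M z  on sets where both norms exceed r ≥ A
  have hNM : ∀ z, N z ≤ M z := by
    intro z
    rw [hNdef, hMdef]
    refine lintegral_mono_ae ?_
    refine (ae_restrict_iff' ?_).2 (ae_of_all _ ?_)
    · exact (measurableSet_lt measurable_const (continuous_norm.comp
        (continuous_const.sub continuous_id)).measurable).inter
        (measurableSet_lt measurable_const continuous_norm.measurable)
    · rintro y ⟨h1, h2⟩
      have hA1 : A ≤ ‖z - y‖ := le_of_lt (lt_of_le_of_lt hr h1)
      have hA2 : A ≤ ‖y‖ := le_of_lt (lt_of_le_of_lt hr h2)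
      refine mul_le_mul' (ENNReal.ofReal_le_ofReal ?_) (ENNReal.ofReal_le_ofReal ?_)
      · rw [hgg' _ hA1]; exact (hcomp _ hA1).2
      · rw [hgg' _ hA2]; exact (hcomp _ hA2).2
  -- M x = M x₀ by rotation
  have hMrot : M x = M x₀ := by
    obtain ⟨e, he⟩ : ∃ e : EuclideanSpace ℝ (Fin d) ≃ₗᵢ[ℝ] EuclideanSpace ℝ (Fin d),
        e x₀ = x := ⟨Submodule.reflection (ℝ ∙ (x₀ - x))ᗮ, Submodule.reflection_sub (by rw [hnx₀])⟩
    have hkey := (e.measurePreserving).setLIntegral_comp_preimage_emb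
      (e.toHomeomorph.measurableEmbedding)
      (fun y => ENNReal.ofReal (c * g' ‖x - y‖) * ENNReal.ofReal (c * g' ‖y‖)) (S x)
    have hset : e ⁻¹' (S x) = S x₀ := by
      ext z
      have h1 : ‖x - e z‖ = ‖x₀ - z‖ := by
        rw [← he, ← map_sub, e.norm_map]
      simp only [hSdef, mem_preimage, mem_setOf_eq, h1, e.norm_map]
    have hpt : ∀ z, ‖x - e z‖ = ‖x₀ - z‖ := fun z => by rw [← he, ← map_sub, e.norm_map]
    rw [hset] at hkey
    rw [hMdef]
    simp only [hpt, e.norm_map] at hkey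
    exact hkey.symm
  -- M x₀ ≤ c^4 * N x₀
  have hMN : M x₀ ≤ ENNReal.ofReal c ^ 4 * N x₀ := by
    rw [hMdef, hNdef]
    calc (∫⁻ y in S x₀, ENNReal.ofReal (c * g' ‖x₀ - y‖) * ENNReal.ofReal (c * g' ‖y‖))
        ≤ ∫⁻ y in S x₀, ENNReal.ofReal c ^ 4 *
            (ENNReal.ofReal (f (x₀ - y)) * ENNReal.ofReal (f y)) := by
          refine lintegral_mono_ae ((ae_restrict_iff' ?_).2 (ae_of_all _ ?_))
          · exact (measurableSet_lt measurable_const (continuous_norm.comp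
              (continuous_const.sub continuous_id)).measurable).inter
              (measurableSet_lt measurable_const continuous_norm.measurable)
          · rintro y ⟨h1, h2⟩
            have hA1 : A ≤ ‖x₀ - y‖ := le_of_lt (lt_of_le_of_lt hr h1)
            have hA2 : A ≤ ‖y‖ := le_of_lt (lt_of_le_of_lt hr h2)
            have e1 : c * g' ‖x₀ - y‖ ≤ c ^ 2 * f (x₀ - y) := by
              rw [hgg' _ hA1]
              have h2' := hginv _ _ (hcomp _ hA1).1
              calc c * g ‖x₀ - y‖ ≤ c * (c * f (x₀ - y)) :=
                    mul_le_mul_of_nonneg_left h2' (le_of_lt hc0)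
                _ = c ^ 2 * f (x₀ - y) := by ring
            have e2 : c * g' ‖y‖ ≤ c ^ 2 * f y := by
              rw [hgg' _ hA2]
              have h2' := hginv _ _ (hcomp _ hA2).1
              calc c * g ‖y‖ ≤ c * (c * f y) :=
                    mul_le_mul_of_nonneg_left h2' (le_of_lt hc0)
                _ = c ^ 2 * f y := by ring
            calc ENNReal.ofReal (c * g' ‖x₀ - y‖) * ENNReal.ofReal (c * g' ‖y‖)
                ≤ ENNReal.ofReal (c ^ 2 * f (x₀ - y)) * ENNReal.ofReal (c ^ 2 * f y) :=
                  mul_le_mul' (ENNReal.ofReal_le_ofReal e1) (ENNReal.ofReal_le_ofReal e2)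
              _ = ENNReal.ofReal c ^ 4 *
                  (ENNReal.ofReal (f (x₀ - y)) * ENNReal.ofReal (f y)) := by
                  rw [ENNReal.ofReal_mul (by positivity), ENNReal.ofReal_mul (by positivity),
                    ENNReal.ofReal_pow (le_of_lt hc0)]
                  ring
      _ = ENNReal.ofReal c ^ 4 * ∫⁻ y in S x₀,
            ENNReal.ofReal (f (x₀ - y)) * ENNReal.ofReal (f y) :=
          lintegral_const_mul' _ _ (by simp)
  -- k₀ ≤ c^2 * k
  have hkk : k₀ ≤ ENNReal.ofReal c ^ 2 * k := by
    have hreal : f x₀ ≤ c ^ 2 * f x := by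
      have h1 : f x₀ ≤ c * g t := by
        have := (hcomp x₀ hx₀A).2; rwa [hnx₀] at this
      have h2 : g t ≤ c * f x := hginv _ _ (hcomp x hx).1
      calc f x₀ ≤ c * g t := h1
        _ ≤ c * (c * f x) := mul_le_mul_of_nonneg_left h2 (le_of_lt hc0)
        _ = c ^ 2 * f x := by ring
    calc k₀ ≤ ENNReal.ofReal (c ^ 2 * f x) := ENNReal.ofReal_le_ofReal hreal
      _ = ENNReal.ofReal c ^ 2 * k := by
        rw [ENNReal.ofReal_mul (by positivity), ENNReal.ofReal_pow (le_of_lt hc0)]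
  -- k⁻¹ ≤ c^2 * k₀⁻¹
  have hkinv : k⁻¹ ≤ ENNReal.ofReal c ^ 2 * k₀⁻¹ := by
    have hc2top : (ENNReal.ofReal c ^ 2 : ℝ≥0∞) ≠ ∞ := by simp
    have hc2ne : (ENNReal.ofReal c ^ 2 : ℝ≥0∞) ≠ 0 := by
      simp [pow_ne_zero, ne_of_gt (ENNReal.ofReal_pos.2 hc0)]
    have h1 : (ENNReal.ofReal c ^ 2 * k)⁻¹ ≤ k₀⁻¹ := ENNReal.inv_le_inv.2 hkk
    have h2 : (ENNReal.ofReal c ^ 2 * k)⁻¹ = (ENNReal.ofReal c ^ 2)⁻¹ * k⁻¹ :=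
      ENNReal.mul_inv (Or.inl hc2ne) (Or.inl hc2top)
    calc k⁻¹ = ENNReal.ofReal c ^ 2 * ((ENNReal.ofReal c ^ 2)⁻¹ * k⁻¹) := by
          rw [← mul_assoc, ENNReal.mul_inv_cancel hc2ne hc2top, one_mul]
      _ = ENNReal.ofReal c ^ 2 * (ENNReal.ofReal c ^ 2 * k)⁻¹ := by rw [h2]
      _ ≤ ENNReal.ofReal c ^ 2 * k₀⁻¹ := mul_le_mul_right h1 _
  -- combine
  rw [hIeq x hfx, hIeq x₀ hfx₀]
  calc N x * k⁻¹ ≤ (ENNReal.ofReal c ^ 4 * N x₀) * k⁻¹ := by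
        refine mul_le_mul_left ?_ _
        calc N x ≤ M x := hNM x
          _ = M x₀ := hMrot
          _ ≤ ENNReal.ofReal c ^ 4 * N x₀ := hMN
    _ = N x₀ * (ENNReal.ofReal c ^ 4 * k⁻¹) := by ring
    _ ≤ N x₀ * (ENNReal.ofReal c ^ 4 * (ENNReal.ofReal c ^ 2 * k₀⁻¹)) :=
        mul_le_mul_right (mul_le_mul_right hkinv _) _
    _ = ENNReal.ofReal c ^ 6 * (N x₀ * k₀⁻¹) := by ring

set_option maxHeartbeats 2000000 in
lemma dir_bound (d : ℕ) (f : EuclideanSpace ℝ (Fin d) → ℝ)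
    (hfint : Integrable f) (hf0 : ∀ x, 0 ≤ f x)
    (A c : ℝ) (hA : 1 ≤ A) (hc : 1 ≤ c)
    (g : ℝ → ℝ) (hgpos : ∀ r : ℝ, A ≤ r → 0 < g r)
    (hgdec : ∀ s t : ℝ, A ≤ s → s ≤ t → g t ≤ g s)
    (hcomp : ∀ x : EuclideanSpace ℝ (Fin d), A ≤ ‖x‖ →
      (1 / c) * g ‖x‖ ≤ f x ∧ f x ≤ c * g ‖x‖)
    (θ : EuclideanSpace ℝ (Fin d)) (hθ : ‖θ‖ = 1) (γ : ℝ) (hγ : 0 ≤ γ)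
    (h : ℝ) (hpos : 0 < h)
    (hc1 : ∀ y : EuclideanSpace ℝ (Fin d),
      Tendsto (fun t : ℝ => f (t • θ - y) / f (t • θ)) atTop
        (nhds (Real.exp (γ * ⟪θ, y⟫_ℝ))))
    (hexp : Integrable (fun y => Real.exp (γ * ⟪θ, y⟫_ℝ) * f y))
    (hh : (∫ y, Real.exp (γ * ⟪θ, y⟫_ℝ) * f y) = h)
    (hc2 : Tendsto (fun t : ℝ => (∫ y, f (t • θ - y) * f y) / f (t • θ)) atTop
      (nhds (2 * h)))
    (ε : ℝ) (hε : 0 < ε) :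
    ∃ r₀ : ℝ, A ≤ r₀ ∧ ∃ T : ℝ, ∀ t : ℝ, T ≤ t →
      (∫⁻ y in {y : EuclideanSpace ℝ (Fin d) | r₀ < ‖t • θ - y‖ ∧ r₀ < ‖y‖},
        ENNReal.ofReal (f (t • θ - y) * f y / f (t • θ))) ≤ ENNReal.ofReal ε := by
  have hc0 : (0:ℝ) < c := lt_of_lt_of_le one_pos hc
  have hginv : ∀ s v : ℝ, (1/c) * s ≤ v → s ≤ c * v := by
    intro s v hsv
    have h' := mul_le_mul_of_nonneg_left hsv (le_of_lt hc0)
    calc s = c * ((1/c) * s) := by field_simp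
      _ ≤ c * v := h'
  have fpos : ∀ z : EuclideanSpace ℝ (Fin d), A ≤ ‖z‖ → 0 < f z := fun z hz =>
    lt_of_lt_of_le (mul_pos (by positivity) (hgpos _ hz)) (hcomp z hz).1
  have hns : ∀ t : ℝ, 0 ≤ t → ‖t • θ‖ = t := by
    intro t ht
    rw [norm_smul, hθ, Real.norm_eq_abs, abs_of_nonneg ht, mul_one]
  set δ : ℝ := min (ε/5) (h/2) with hδdef
  have hδ0 : 0 < δ := lt_min (by positivity) (by positivity)
  have hδε : δ ≤ ε/5 := min_le_left _ _
  have hδh : δ ≤ h/2 := min_le_right _ _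
  have hexp0 : ∀ y, 0 ≤ Real.exp (γ * ⟪θ, y⟫_ℝ) * f y := fun y =>
    mul_nonneg (Real.exp_nonneg _) (hf0 y)
  -- tail of exp integral tendsto 0 (real valued)
  have tailexp : Tendsto (fun r : ℝ =>
      ∫ y in {y : EuclideanSpace ℝ (Fin d) | r < ‖y‖}, Real.exp (γ * ⟪θ, y⟫_ℝ) * f y)
      atTop (𝓝 0) := by
    have hlt := tail_lintegral_tendsto d _ hexp
    have heq : ∀ r : ℝ, (∫ y in {y : EuclideanSpace ℝ (Fin d) | r < ‖y‖},
        Real.exp (γ * ⟪θ, y⟫_ℝ) * f y)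
        = (∫⁻ y in {y : EuclideanSpace ℝ (Fin d) | r < ‖y‖},
            ENNReal.ofReal (Real.exp (γ * ⟪θ, y⟫_ℝ) * f y)).toReal := by
      intro r
      rw [integral_eq_lintegral_of_nonneg_ae (ae_of_all _ hexp0) hexp.1.restrict]
    have : Tendsto (fun r : ℝ => (∫⁻ y in {y : EuclideanSpace ℝ (Fin d) | r < ‖y‖},
        ENNReal.ofReal (Real.exp (γ * ⟪θ, y⟫_ℝ) * f y)).toReal) atTop (𝓝 0) := by
      have h2 := (ENNReal.tendsto_toReal (by simp : (0:ℝ≥0∞) ≠ ∞)).comp hlt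
      simpa [Function.comp_def] using h2
    exact this.congr (fun r => (heq r).symm)
  -- choose r₀
  have hev : ∀ᶠ r : ℝ in atTop, (∫ y in {y : EuclideanSpace ℝ (Fin d) | r < ‖y‖},
      Real.exp (γ * ⟪θ, y⟫_ℝ) * f y) < δ := tailexp.eventually (eventually_lt_nhds hδ0)
  obtain ⟨r₀, hr₀A, hr₀tail⟩ : ∃ r₀ : ℝ, A ≤ r₀ ∧
      (∫ y in {y : EuclideanSpace ℝ (Fin d) | r₀ < ‖y‖},
        Real.exp (γ * ⟪θ, y⟫_ℝ) * f y) < δ := by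
    obtain ⟨R, hR⟩ := (hev.and (eventually_ge_atTop A)).exists
    exact ⟨R, hR.2, hR.1⟩
  refine ⟨r₀, hr₀A, ?_⟩
  have hr₀0 : 0 < r₀ := lt_of_lt_of_le one_pos (le_trans hA hr₀A)
  set B : Set (EuclideanSpace ℝ (Fin d)) := {y | ‖y‖ ≤ r₀} with hBdef
  have hBmeas : MeasurableSet B := measurableSet_le continuous_norm.measurable measurable_const
  have hBc : Bᶜ = {y : EuclideanSpace ℝ (Fin d) | r₀ < ‖y‖} := by
    ext y; simp [hBdef, not_le, Set.mem_compl_iff]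
  set h₀ : ℝ := ∫ y in B, Real.exp (γ * ⟪θ, y⟫_ℝ) * f y with hh₀def
  have hsplit : h₀ + (∫ y in Bᶜ, Real.exp (γ * ⟪θ, y⟫_ℝ) * f y) = h := by
    rw [hh₀def, integral_add_compl hBmeas hexp, hh]
  have hh₀close : h - h₀ < δ := by
    rw [hBc] at hsplit; linarith [hr₀tail, hsplit]
  have hh₀δ : δ ≤ h₀ := by
    have : h₀ > h - δ := by linarith
    linarith [hδh, this]
  -- domination constant
  set D : ℝ := c^2 * (Real.exp (γ * r₀) + 1) with hDdef
  have hD0 : 0 < D := by positivity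
  have hinnerr₀ : ⟪θ, r₀ • θ⟫_ℝ = r₀ := by
    rw [real_inner_smul_right, real_inner_self_eq_norm_sq, hθ]; ring
  have evD : ∀ᶠ t : ℝ in atTop,
      f ((t - r₀) • θ) / f (t • θ) ≤ Real.exp (γ * r₀) + 1 := by
    have := (hc1 (r₀ • θ)).eventually (eventually_le_nhds
      (by rw [hinnerr₀]; exact lt_add_one _))
    refine this.mono (fun t ht => ?_)
    have heq : t • θ - r₀ • θ = (t - r₀) • θ := (sub_smul t r₀ θ).symm
    rwa [heq] at ht
  have evDom : ∀ᶠ t : ℝ in atTop, ∀ y ∈ B, f (t • θ - y) ≤ D * f (t • θ) := by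
    filter_upwards [evD, eventually_ge_atTop (A + r₀), eventually_ge_atTop A]
      with t hDt ht1 ht2
    intro y hy
    have hyr : ‖y‖ ≤ r₀ := hy
    have ht0 : (0:ℝ) ≤ t := le_trans (by linarith [le_trans hA hr₀A]) ht1
    have htr : A ≤ t - r₀ := by linarith
    have hnorm1 : t - r₀ ≤ ‖t • θ - y‖ := by
      have := norm_sub_norm_le (t • θ) y
      rw [hns t ht0] at this
      linarith
    have hAn : A ≤ ‖t • θ - y‖ := le_trans htr hnorm1
    have hn2 : ‖(t - r₀) • θ‖ = t - r₀ := hns _ (by linarith [le_trans hA htr])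
    have hA2 : A ≤ ‖(t - r₀) • θ‖ := by rw [hn2]; exact htr
    have step1 : f (t • θ - y) ≤ c * g ‖t • θ - y‖ := (hcomp _ hAn).2
    have step2 : g ‖t • θ - y‖ ≤ g (t - r₀) := hgdec _ _ htr hnorm1
    have step3 : g (t - r₀) ≤ c * f ((t - r₀) • θ) := by
      have := hginv _ _ (hcomp _ hA2).1
      rwa [hn2] at this
    have hftpos : 0 < f (t • θ) := fpos _ (by rw [hns t ht0]; linarith)
    have step4 : f ((t - r₀) • θ) ≤ (Real.exp (γ * r₀) + 1) * f (t • θ) := by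
      rw [div_le_iff₀ hftpos] at hDt
      linarith
    calc f (t • θ - y) ≤ c * g ‖t • θ - y‖ := step1
      _ ≤ c * g (t - r₀) := mul_le_mul_of_nonneg_left step2 (le_of_lt hc0)
      _ ≤ c * (c * f ((t - r₀) • θ)) := mul_le_mul_of_nonneg_left step3 (le_of_lt hc0)
      _ ≤ c * (c * ((Real.exp (γ * r₀) + 1) * f (t • θ))) := by
          refine mul_le_mul_of_nonneg_left ?_ (le_of_lt hc0)
          exact mul_le_mul_of_nonneg_left step4 (le_of_lt hc0)
      _ = D * f (t • θ) := by rw [hDdef]; ring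
  -- dominated convergence for the ball piece
  have hPT : Tendsto (fun t : ℝ => ∫ y in B, f (t • θ - y) * f y / f (t • θ))
      atTop (𝓝 h₀) := by
    refine tendsto_integral_filter_of_dominated_convergence (fun y => D * f y)
      ?_ ?_ ?_ ?_
    · refine Eventually.of_forall (fun t => ?_)
      have h1 : AEStronglyMeasurable (fun y : EuclideanSpace ℝ (Fin d) =>
          f (t • θ - y)) volume := by
        have hmp : MeasurePreserving (fun y : EuclideanSpace ℝ (Fin d) => t • θ - y)
            volume volume := by
          have hcomp2 : (fun y : EuclideanSpace ℝ (Fin d) => t • θ - y)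
              = (fun y => t • θ + y) ∘ (fun y => -y) := by
            funext y; simp [sub_eq_add_neg]
          rw [hcomp2]
          exact (measurePreserving_add_left volume (t • θ)).comp
            (Measure.measurePreserving_neg volume)
        exact (hfint.1.comp_quasiMeasurePreserving hmp.quasiMeasurePreserving)
      have h2 := ((h1.mul hfint.1).mul_const (f (t • θ))⁻¹).restrict
        (s := B) (μ := volume)
      simpa [div_eq_mul_inv] using h2
    · filter_upwards [evDom, eventually_ge_atTop A] with t hDt htA
      refine (ae_restrict_iff' hBmeas).2 (ae_of_all _ (fun y hy => ?_))
      have ht0 : (0:ℝ) ≤ t := le_trans (le_trans zero_le_one hA) htA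
      have hftpos : 0 < f (t • θ) := fpos _ (by rw [hns t ht0]; exact htA)
      have hnn : 0 ≤ f (t • θ - y) * f y / f (t • θ) :=
        div_nonneg (mul_nonneg (hf0 _) (hf0 _)) (le_of_lt hftpos)
      rw [Real.norm_eq_abs, abs_of_nonneg hnn]
      rw [div_le_iff₀ hftpos]
      calc f (t • θ - y) * f y ≤ (D * f (t • θ)) * f y :=
            mul_le_mul_of_nonneg_right (hDt y hy) (hf0 y)
        _ = D * f y * f (t • θ) := by ring
    · exact (hfint.const_mul D).restrict
    · refine (ae_of_all _ (fun y => ?_))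
      have heq : ∀ t : ℝ, f (t • θ - y) * f y / f (t • θ)
          = f (t • θ - y) / f (t • θ) * f y := fun t => mul_div_right_comm _ _ _
      simp only [heq]
      exact (hc1 y).mul_const (f y)
  -- eventual bounds from hc2
  have evConv : ∀ᶠ t : ℝ in atTop,
      (∫ y, f (t • θ - y) * f y) / f (t • θ) ∈ Set.Ioo (2*h - δ) (2*h + δ) :=
    hc2.eventually (Ioo_mem_nhds (by linarith) (by linarith))
  have evP : ∀ᶠ t : ℝ in atTop,
      h₀ - δ ≤ ∫ y in B, f (t • θ - y) * f y / f (t • θ) :=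
    hPT.eventually (eventually_ge_nhds (by linarith))
  have evMain : ∀ᶠ t : ℝ in atTop,
      (∫⁻ y in {y : EuclideanSpace ℝ (Fin d) | r₀ < ‖t • θ - y‖ ∧ r₀ < ‖y‖},
        ENNReal.ofReal (f (t • θ - y) * f y / f (t • θ))) ≤ ENNReal.ofReal ε := by
    filter_upwards [evConv, evP, eventually_ge_atTop A, eventually_gt_atTop (2*r₀)]
      with t hconv hP htA ht2r
    have ht0 : (0:ℝ) ≤ t := le_trans (le_trans zero_le_one hA) htA
    have hft : 0 < f (t • θ) := fpos _ (by rw [hns t ht0]; exact htA)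
    set kreal : ℝ := f (t • θ) with hkrdef
    set k : ℝ≥0∞ := ENNReal.ofReal kreal with hkdef
    have hk0 : k ≠ 0 := ne_of_gt (ENNReal.ofReal_pos.2 hft)
    have hktop : k ≠ ∞ := ENNReal.ofReal_ne_top
    -- integrability of the convolution integrand at this t
    have hconvpos : 0 < ∫ y, f (t • θ - y) * f y := by
      have h1 : (0:ℝ) < (∫ y, f (t • θ - y) * f y) / kreal :=
        lt_of_lt_of_le (by linarith [hpos, hδh]) (le_of_lt hconv.1)
      have := mul_pos h1 hft
      rwa [div_mul_cancel₀ _ (ne_of_gt hft)] at this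
    have hint : Integrable (fun y => f (t • θ - y) * f y) := by
      by_contra hni
      rw [integral_undef hni] at hconvpos
      exact lt_irrefl 0 hconvpos
    have hprodnn : ∀ y, 0 ≤ f (t • θ - y) * f y := fun y => mul_nonneg (hf0 _) (hf0 _)
    -- L : full lintegral
    have hLeq : (∫⁻ y, ENNReal.ofReal (f (t • θ - y) * f y))
        = ENNReal.ofReal (∫ y, f (t • θ - y) * f y) :=
      (ofReal_integral_eq_lintegral_ofReal hint (ae_of_all _ hprodnn)).symm
    have hLle : (∫⁻ y, ENNReal.ofReal (f (t • θ - y) * f y))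
        ≤ ENNReal.ofReal ((2*h + δ) * kreal) := by
      rw [hLeq]
      apply ENNReal.ofReal_le_ofReal
      have h2 := le_of_lt hconv.2
      rwa [div_le_iff₀ hft] at h2
    -- P : ball piece
    have hPeq : (∫⁻ y in B, ENNReal.ofReal (f (t • θ - y) * f y))
        = ENNReal.ofReal (∫ y in B, f (t • θ - y) * f y) :=
      (ofReal_integral_eq_lintegral_ofReal hint.integrableOn
        (ae_of_all _ hprodnn)).symm
    have hPB : (∫ y in B, f (t • θ - y) * f y)
        = (∫ y in B, f (t • θ - y) * f y / f (t • θ)) * kreal := by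
      rw [integral_div]
      exact (div_mul_cancel₀ _ (ne_of_gt hft)).symm
    have hPge : ENNReal.ofReal ((h₀ - δ) * kreal)
        ≤ ∫⁻ y in B, ENNReal.ofReal (f (t • θ - y) * f y) := by
      rw [hPeq, hPB]
      exact ENNReal.ofReal_le_ofReal (mul_le_mul_of_nonneg_right hP (le_of_lt hft))
    -- Q = P by reflection
    set B' : Set (EuclideanSpace ℝ (Fin d)) := {y | ‖t • θ - y‖ ≤ r₀} with hB'def
    have hB'meas : MeasurableSet B' :=
      measurableSet_le (continuous_norm.comp
        (continuous_const.sub continuous_id)).measurable measurable_const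
    have hQP : (∫⁻ y in B', ENNReal.ofReal (f (t • θ - y) * f y))
        = ∫⁻ y in B, ENNReal.ofReal (f (t • θ - y) * f y) := by
      have hmp : MeasurePreserving (fun y : EuclideanSpace ℝ (Fin d) => t • θ - y)
          volume volume := by
        have hcomp2 : (fun y : EuclideanSpace ℝ (Fin d) => t • θ - y)
            = (fun y => t • θ + y) ∘ (fun y => -y) := by
          funext y; simp [sub_eq_add_neg]
        rw [hcomp2]
        exact (measurePreserving_add_left volume (t • θ)).comp
          (Measure.measurePreserving_neg volume)
      have hemb : MeasurableEmbedding (fun y : EuclideanSpace ℝ (Fin d) => t • θ - y) :=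
        (Homeomorph.subLeft (t • θ)).measurableEmbedding
      have hkey := hmp.setLIntegral_comp_preimage_emb hemb
        (fun y => ENNReal.ofReal (f (t • θ - y) * f y)) B'
      have hpre : (fun y : EuclideanSpace ℝ (Fin d) => t • θ - y) ⁻¹' B' = B := by
        ext z
        simp [hB'def, hBdef, sub_sub_cancel]
      rw [hpre] at hkey
      rw [← hkey]
      refine lintegral_congr (fun z => ?_)
      rw [sub_sub_cancel, mul_comm]
    -- decomposition of the lintegral
    have hSc : {y : EuclideanSpace ℝ (Fin d) | r₀ < ‖t • θ - y‖ ∧ r₀ < ‖y‖}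
        = (B ∪ B')ᶜ := by
      ext y
      simp only [hBdef, hB'def, Set.mem_compl_iff, Set.mem_union, mem_setOf_eq, not_or, not_le]
      exact ⟨fun hy => ⟨hy.2, hy.1⟩, fun hy => ⟨hy.2, hy.1⟩⟩
    have hdisj : Disjoint B B' := by
      rw [Set.disjoint_left]
      intro y hyB hyB'
      have h1 : ‖(t • θ : EuclideanSpace ℝ (Fin d))‖ ≤ ‖t • θ - y‖ + ‖y‖ := by
        have := norm_add_le (t • θ - y) y
        rwa [sub_add_cancel] at this
      rw [hns t ht0] at h1
      have hyB2 : ‖y‖ ≤ r₀ := hyB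
      have hyB'2 : ‖t • θ - y‖ ≤ r₀ := hyB'
      linarith
    have hsplitL : (∫⁻ y in B ∪ B', ENNReal.ofReal (f (t • θ - y) * f y))
        + (∫⁻ y in (B ∪ B')ᶜ, ENNReal.ofReal (f (t • θ - y) * f y))
        = ∫⁻ y, ENNReal.ofReal (f (t • θ - y) * f y) :=
      lintegral_add_compl _ (hBmeas.union hB'meas)
    have hunion : (∫⁻ y in B ∪ B', ENNReal.ofReal (f (t • θ - y) * f y))
        = (∫⁻ y in B, ENNReal.ofReal (f (t • θ - y) * f y))
          + ∫⁻ y in B', ENNReal.ofReal (f (t • θ - y) * f y) :=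
      lintegral_union hB'meas hdisj
    set Tail : ℝ≥0∞ := ∫⁻ y in (B ∪ B')ᶜ, ENNReal.ofReal (f (t • θ - y) * f y)
      with hTaildef
    have hTail1 : Tail + ENNReal.ofReal (2*(h₀ - δ) * kreal)
        ≤ ENNReal.ofReal ((2*h + δ) * kreal) := by
      have hsmall : ENNReal.ofReal (2*(h₀ - δ) * kreal)
          ≤ (∫⁻ y in B, ENNReal.ofReal (f (t • θ - y) * f y))
            + ∫⁻ y in B', ENNReal.ofReal (f (t • θ - y) * f y) := by
        have heq2 : 2*(h₀ - δ) * kreal = (h₀ - δ) * kreal + (h₀ - δ) * kreal := by ring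
        rw [heq2]
        calc ENNReal.ofReal ((h₀ - δ) * kreal + (h₀ - δ) * kreal)
            ≤ ENNReal.ofReal ((h₀ - δ) * kreal) + ENNReal.ofReal ((h₀ - δ) * kreal) :=
              ENNReal.ofReal_add_le
          _ ≤ _ := add_le_add hPge (by rw [hQP]; exact hPge)
      calc Tail + ENNReal.ofReal (2*(h₀ - δ) * kreal)
          ≤ Tail + ((∫⁻ y in B, ENNReal.ofReal (f (t • θ - y) * f y))
            + ∫⁻ y in B', ENNReal.ofReal (f (t • θ - y) * f y)) :=
            add_le_add_right hsmall _
        _ = ∫⁻ y, ENNReal.ofReal (f (t • θ - y) * f y) := by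
            rw [← hsplitL, ← hunion, add_comm]
        _ ≤ ENNReal.ofReal ((2*h + δ) * kreal) := hLle
    have hTail2 : Tail ≤ ENNReal.ofReal (ε * kreal) := by
      have h1 : Tail ≤ ENNReal.ofReal ((2*h + δ) * kreal)
          - ENNReal.ofReal (2*(h₀ - δ) * kreal) := ENNReal.le_sub_of_add_le_right ENNReal.ofReal_ne_top hTail1
      have h2 : ENNReal.ofReal ((2*h + δ) * kreal) - ENNReal.ofReal (2*(h₀ - δ) * kreal)
          = ENNReal.ofReal ((2*h + δ) * kreal - 2*(h₀ - δ) * kreal) := by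
        rw [ENNReal.ofReal_sub]
        have : (0:ℝ) ≤ h₀ - δ := by linarith
        positivity
      have h3 : (2*h + δ) * kreal - 2*(h₀ - δ) * kreal ≤ ε * kreal := by
        have hcoef : 2*h + δ - 2*(h₀ - δ) ≤ ε := by
          have : h - h₀ ≤ δ := le_of_lt hh₀close
          linarith [hδε]
        nlinarith [le_of_lt hft]
      calc Tail ≤ ENNReal.ofReal ((2*h + δ) * kreal) - ENNReal.ofReal (2*(h₀ - δ) * kreal) := h1
        _ = ENNReal.ofReal ((2*h + δ) * kreal - 2*(h₀ - δ) * kreal) := h2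
        _ ≤ ENNReal.ofReal (ε * kreal) := ENNReal.ofReal_le_ofReal h3
    -- convert the goal
    have hIeq : (∫⁻ y in {y : EuclideanSpace ℝ (Fin d) | r₀ < ‖t • θ - y‖ ∧ r₀ < ‖y‖},
        ENNReal.ofReal (f (t • θ - y) * f y / f (t • θ))) = Tail * k⁻¹ := by
      have hpt : ∀ y, ENNReal.ofReal (f (t • θ - y) * f y / f (t • θ))
          = ENNReal.ofReal (f (t • θ - y) * f y) * k⁻¹ := by
        intro y
        rw [ENNReal.ofReal_div_of_pos hft, div_eq_mul_inv]
      simp only [hpt]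
      rw [hSc, hTaildef]
      exact lintegral_mul_const' _ _ (ENNReal.inv_ne_top.2 hk0)
    rw [hIeq]
    calc Tail * k⁻¹ ≤ ENNReal.ofReal (ε * kreal) * k⁻¹ := mul_le_mul_left hTail2 _
      _ = ENNReal.ofReal ε * (k * k⁻¹) := by
          rw [ENNReal.ofReal_mul (le_of_lt hε), mul_assoc]
      _ = ENNReal.ofReal ε := by rw [ENNReal.mul_inv_cancel hk0 hktop, mul_one]
  rw [eventually_atTop] at evMain
  obtain ⟨T, hT⟩ := evMain
  exact ⟨T, hT⟩

set_option maxHeartbeats 2000000 in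
theorem stmt12 (d : ℕ) (f : EuclideanSpace ℝ (Fin d) → ℝ)
    (hfint : Integrable f) (hf0 : ∀ x, 0 ≤ f x)
    (A c : ℝ) (hA : 1 ≤ A) (hc : 1 ≤ c)
    (g : ℝ → ℝ) (hgpos : ∀ r : ℝ, A ≤ r → 0 < g r)
    (hgdec : ∀ s t : ℝ, A ≤ s → s ≤ t → g t ≤ g s)
    (hcomp : ∀ x : EuclideanSpace ℝ (Fin d), A ≤ ‖x‖ →
      (1 / c) * g ‖x‖ ≤ f x ∧ f x ≤ c * g ‖x‖)
    (θ : EuclideanSpace ℝ (Fin d)) (hθ : ‖θ‖ = 1) (γ : ℝ) (hγ : 0 ≤ γ)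
    (h : ℝ)
    (hc1 : ∀ y : EuclideanSpace ℝ (Fin d),
      Tendsto (fun t : ℝ => f (t • θ - y) / f (t • θ)) atTop
        (nhds (Real.exp (γ * ⟪θ, y⟫_ℝ))))
    (hexp : Integrable (fun y => Real.exp (γ * ⟪θ, y⟫_ℝ) * f y))
    (hh : (∫ y, Real.exp (γ * ⟪θ, y⟫_ℝ) * f y) = h)
    (hc2 : Tendsto (fun t : ℝ => (∫ y, f (t • θ - y) * f y) / f (t • θ)) atTop
      (nhds (2 * h))) :
    Tendsto (KA d A f) atTop (nhds 0) := by
  have hc0 : (0:ℝ) < c := lt_of_lt_of_le one_pos hc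
  have fpos : ∀ z : EuclideanSpace ℝ (Fin d), A ≤ ‖z‖ → 0 < f z := fun z hz =>
    lt_of_lt_of_le (mul_pos (by positivity) (hgpos _ hz)) (hcomp z hz).1
  have hexp0 : ∀ y, 0 ≤ Real.exp (γ * ⟪θ, y⟫_ℝ) * f y := fun y =>
    mul_nonneg (Real.exp_nonneg _) (hf0 y)
  have hhnn : 0 ≤ h := hh ▸ integral_nonneg hexp0
  rcases eq_or_lt_of_le hhnn with hh0 | hpos
  · -- degenerate case h = 0 : f vanishes a.e.
    have h0 : (∫ y, Real.exp (γ * ⟪θ, y⟫_ℝ) * f y) = 0 := by rw [hh, ← hh0]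
    have hfzero : f =ᵐ[(volume : Measure (EuclideanSpace ℝ (Fin d)))] 0 := by
      have hae := (integral_eq_zero_iff_of_nonneg hexp0 hexp).1 h0
      filter_upwards [hae] with y hy
      have hexppos : 0 < Real.exp (γ * ⟪θ, y⟫_ℝ) := Real.exp_pos _
      have : Real.exp (γ * ⟪θ, y⟫_ℝ) * f y = 0 := hy
      have := mul_eq_zero.1 this
      rcases this with h' | h'
      · exact absurd h' (ne_of_gt hexppos)
      · exact h'
    have hKA : KA d A f = fun _ => 0 := by
      funext r
      rw [KA]
      refine le_antisymm (iSup_le fun x => ?_) (zero_le)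
      have hae : ∀ᵐ y ∂(volume.restrict
          {y : EuclideanSpace ℝ (Fin d) |
            r < ‖(x : EuclideanSpace ℝ (Fin d)) - y‖ ∧ r < ‖y‖}),
          ENNReal.ofReal (f ((x : EuclideanSpace ℝ (Fin d)) - y) * f y /
            f (x : EuclideanSpace ℝ (Fin d))) = 0 := by
        refine ae_restrict_of_ae ?_
        filter_upwards [hfzero] with y hy
        simp [hy]
      rw [lintegral_congr_ae hae]
      simp
    rw [hKA]
    exact tendsto_const_nhds
  · -- main case 0 < h
    rw [ENNReal.tendsto_atTop_zero]
    intro ε hε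
    obtain ⟨ε', hε'0, hε'le⟩ : ∃ ε' : ℝ, 0 < ε' ∧ ENNReal.ofReal ε' ≤ ε := by
      rcases eq_or_ne ε ∞ with rfl | hne
      · exact ⟨1, one_pos, le_top⟩
      · exact ⟨ε.toReal, ENNReal.toReal_pos (ne_of_gt hε) hne,
          le_of_eq (ENNReal.ofReal_toReal hne)⟩
    suffices hKey : ∃ R, ∀ r ≥ R, KA d A f r ≤ ENNReal.ofReal ε' by
      obtain ⟨R, hR⟩ := hKey
      exact ⟨R, fun r hr => le_trans (hR r hr) hε'le⟩
    set c6 : ℝ := c ^ 6 with hc6def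
    have hc6 : 0 < c6 := by positivity
    set εJ : ℝ := ε' / c6 with hεJdef
    have hεJ : 0 < εJ := by positivity
    obtain ⟨r₀, hr₀A, T, hT⟩ := dir_bound d f hfint hf0 A c hA hc g hgpos hgdec hcomp
      θ hθ γ hγ h hpos hc1 hexp hh hc2 εJ hεJ
    set T' : ℝ := max T A with hT'def
    have hgT' : 0 < g T' := hgpos _ (le_max_right _ _)
    have hgA : 0 < g A := hgpos _ le_rfl
    set CT : ℝ := c ^ 2 * g A / g T' with hCTdef
    have hCT0 : 0 ≤ CT := by positivity
    -- tail bound eventually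
    have htail := tail_lintegral_tendsto d f hfint
    have htail2 : Tendsto (fun r : ℝ => ENNReal.ofReal CT *
        ∫⁻ y in {y : EuclideanSpace ℝ (Fin d) | r < ‖y‖}, ENNReal.ofReal (f y))
        atTop (𝓝 0) := by
      have h2 := ENNReal.Tendsto.const_mul htail
        (Or.inr (ENNReal.ofReal_ne_top : ENNReal.ofReal CT ≠ ∞))
      simpa using h2
    have hevtail : ∀ᶠ r : ℝ in atTop, ENNReal.ofReal CT *
        (∫⁻ y in {y : EuclideanSpace ℝ (Fin d) | r < ‖y‖}, ENNReal.ofReal (f y))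
          ≤ ENNReal.ofReal ε' :=
      htail2.eventually (eventually_le_nhds (ENNReal.ofReal_pos.2 hε'0))
    obtain ⟨R₀, hR₀⟩ := eventually_atTop.1 (hevtail.and (eventually_ge_atTop (max r₀ A)))
    refine ⟨R₀, fun r hr => ?_⟩
    obtain ⟨hrtail, hrmax⟩ := hR₀ r hr
    have hrr₀ : r₀ ≤ r := le_trans (le_max_left _ _) hrmax
    have hrA : A ≤ r := le_trans (le_max_right _ _) hrmax
    rw [KA]
    refine iSup_le ?_
    rintro ⟨x, hx⟩
    simp only
    by_cases hxT : ‖x‖ ≤ T'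
    · -- bounded region
      have hfx : 0 < f x := fpos x hx
      have hmono : ∀ y : EuclideanSpace ℝ (Fin d),
          y ∈ {y : EuclideanSpace ℝ (Fin d) | r < ‖x - y‖ ∧ r < ‖y‖} →
          ENNReal.ofReal (f (x - y) * f y / f x)
            ≤ ENNReal.ofReal CT * ENNReal.ofReal (f y) := by
        rintro y ⟨h1, h2⟩
        have hA1 : A ≤ ‖x - y‖ := le_of_lt (lt_of_le_of_lt hrA h1)
        have hfxy : f (x - y) ≤ c * g A := by
          calc f (x - y) ≤ c * g ‖x - y‖ := (hcomp _ hA1).2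
            _ ≤ c * g A := mul_le_mul_of_nonneg_left (hgdec _ _ le_rfl hA1) (le_of_lt hc0)
        have hfxlow : (1/c) * g T' ≤ f x := by
          calc (1/c) * g T' ≤ (1/c) * g ‖x‖ :=
                mul_le_mul_of_nonneg_left (hgdec _ _ hx hxT) (by positivity)
            _ ≤ f x := (hcomp x hx).1
        have hlow : 0 < (1/c) * g T' := by positivity
        have key : f (x - y) * f y / f x ≤ CT * f y := by
          calc f (x - y) * f y / f x ≤ f (x - y) * f y / ((1/c) * g T') :=
                div_le_div_of_nonneg_left (mul_nonneg (hf0 _) (hf0 _)) hlow hfxlow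
            _ ≤ (c * g A) * f y / ((1/c) * g T') := by
                gcongr
                exact hf0 y
            _ = CT * f y := by
                rw [hCTdef]; field_simp
        calc ENNReal.ofReal (f (x - y) * f y / f x) ≤ ENNReal.ofReal (CT * f y) :=
              ENNReal.ofReal_le_ofReal key
          _ = ENNReal.ofReal CT * ENNReal.ofReal (f y) := ENNReal.ofReal_mul hCT0
      have hmeasS : MeasurableSet {y : EuclideanSpace ℝ (Fin d) | r < ‖x - y‖ ∧ r < ‖y‖} :=
        (measurableSet_lt measurable_const (continuous_norm.comp
          (continuous_const.sub continuous_id)).measurable).inter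
          (measurableSet_lt measurable_const continuous_norm.measurable)
      calc (∫⁻ y in {y : EuclideanSpace ℝ (Fin d) | r < ‖x - y‖ ∧ r < ‖y‖},
            ENNReal.ofReal (f (x - y) * f y / f x))
          ≤ ∫⁻ y in {y : EuclideanSpace ℝ (Fin d) | r < ‖x - y‖ ∧ r < ‖y‖},
            ENNReal.ofReal CT * ENNReal.ofReal (f y) :=
            lintegral_mono_ae ((ae_restrict_iff' hmeasS).2 (ae_of_all _ hmono))
        _ ≤ ∫⁻ y in {y : EuclideanSpace ℝ (Fin d) | r < ‖y‖},
            ENNReal.ofReal CT * ENNReal.ofReal (f y) :=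
            lintegral_mono_set (fun y hy => hy.2)
        _ = ENNReal.ofReal CT * ∫⁻ y in {y : EuclideanSpace ℝ (Fin d) | r < ‖y‖},
            ENNReal.ofReal (f y) := lintegral_const_mul' _ _ ENNReal.ofReal_ne_top
        _ ≤ ENNReal.ofReal ε' := hrtail
    · -- far region
      push_neg at hxT
      have h1 := rot_bound d f hf0 A c hA hc g hgpos hcomp θ hθ x r hx hrA
      have hTx : T ≤ ‖x‖ := le_trans (le_max_left _ _) (le_of_lt hxT)
      have h2 := hT ‖x‖ hTx
      have hsub : {y : EuclideanSpace ℝ (Fin d) | r < ‖‖x‖ • θ - y‖ ∧ r < ‖y‖}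
          ⊆ {y : EuclideanSpace ℝ (Fin d) | r₀ < ‖‖x‖ • θ - y‖ ∧ r₀ < ‖y‖} := by
        rintro y ⟨hy1, hy2⟩
        exact ⟨lt_of_le_of_lt hrr₀ hy1, lt_of_le_of_lt hrr₀ hy2⟩
      calc (∫⁻ y in {y : EuclideanSpace ℝ (Fin d) | r < ‖x - y‖ ∧ r < ‖y‖},
            ENNReal.ofReal (f (x - y) * f y / f x))
          ≤ ENNReal.ofReal c ^ 6 *
            ∫⁻ y in {y : EuclideanSpace ℝ (Fin d) | r < ‖‖x‖ • θ - y‖ ∧ r < ‖y‖},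
              ENNReal.ofReal (f (‖x‖ • θ - y) * f y / f (‖x‖ • θ)) := h1
        _ ≤ ENNReal.ofReal c ^ 6 *
            ∫⁻ y in {y : EuclideanSpace ℝ (Fin d) | r₀ < ‖‖x‖ • θ - y‖ ∧ r₀ < ‖y‖},
              ENNReal.ofReal (f (‖x‖ • θ - y) * f y / f (‖x‖ • θ)) :=
            mul_le_mul_right (lintegral_mono_set hsub) _
        _ ≤ ENNReal.ofReal c ^ 6 * ENNReal.ofReal εJ := mul_le_mul_right h2 _
        _ = ENNReal.ofReal ε' := by
            rw [← ENNReal.ofReal_pow (le_of_lt hc0), ← ENNReal.ofReal_mul (by positivity)]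
            congr 1
            rw [hεJdef, hc6def]
            field_simp
end

section
/- Let f ∈ L¹(ℝ^d), f ≥ 0, with f(x) ≍ g(|x|) for |x| ≥ A where g is decreasing and positive, and suppose f(tθ-y)/f(tθ) → e^{γ(θ·y)} for all y, ∫e^{γ(θ·y)}f(y)dy = h < ∞, and (f*f)(tθ)/f(tθ) → 2h. Then for every fixed r ≥ A, lim_{t→∞} (1/f(tθ)) ∫_{|tθ-y|>r, |y|>r} f(tθ-y)f(y) dy = 2 ∫_{|y|>r} e^{γ(θ·y)} f(y) dy. -/
open Filter MeasureTheory
open scoped InnerProductSpace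


set_option maxHeartbeats 1000000 in
theorem stmt13 (d : ℕ) (f : EuclideanSpace ℝ (Fin d) → ℝ)
    (hfint : Integrable f) (hf0 : ∀ x, 0 ≤ f x)
    (A c : ℝ) (hA : 1 ≤ A) (hc : 1 ≤ c)
    (g : ℝ → ℝ) (hgpos : ∀ r : ℝ, A ≤ r → 0 < g r)
    (hgdec : ∀ s t : ℝ, A ≤ s → s ≤ t → g t ≤ g s)
    (hcomp : ∀ x : EuclideanSpace ℝ (Fin d), A ≤ ‖x‖ →
      (1 / c) * g ‖x‖ ≤ f x ∧ f x ≤ c * g ‖x‖)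
    (θ : EuclideanSpace ℝ (Fin d)) (hθ : ‖θ‖ = 1) (γ : ℝ) (hγ : 0 ≤ γ)
    (h : ℝ)
    (hc1 : ∀ y : EuclideanSpace ℝ (Fin d),
      Tendsto (fun t : ℝ => f (t • θ - y) / f (t • θ)) atTop
        (nhds (Real.exp (γ * ⟪θ, y⟫_ℝ))))
    (hexp : Integrable (fun y => Real.exp (γ * ⟪θ, y⟫_ℝ) * f y))
    (hh : (∫ y, Real.exp (γ * ⟪θ, y⟫_ℝ) * f y) = h)
    (hc2 : Tendsto (fun t : ℝ => (∫ y, f (t • θ - y) * f y) / f (t • θ)) atTop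
      (nhds (2 * h))) :
    ∀ r : ℝ, A ≤ r →
      Tendsto (fun t : ℝ =>
          (∫ y in {y : EuclideanSpace ℝ (Fin d) | r < ‖t • θ - y‖ ∧ r < ‖y‖},
            f (t • θ - y) * f y) / f (t • θ)) atTop
        (nhds (2 * ∫ y in {y : EuclideanSpace ℝ (Fin d) | r < ‖y‖},
          Real.exp (γ * ⟪θ, y⟫_ℝ) * f y)) := by
  intro r hr
  have hmeas := hfint.aestronglyMeasurable
  have hc0 : (0:ℝ) < c := lt_of_lt_of_le one_pos hc
  have hA0 : (0:ℝ) < A := lt_of_lt_of_le one_pos hA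
  have hθnorm : ∀ t : ℝ, 0 ≤ t → ‖t • θ‖ = t := by
    intro t ht
    rw [norm_smul, hθ, mul_one, Real.norm_eq_abs, abs_of_nonneg ht]
  have hfpos : ∀ t : ℝ, A ≤ t → 0 < f (t • θ) := by
    intro t ht
    have ht0 : (0:ℝ) ≤ t := le_trans hA0.le ht
    have h1 : A ≤ ‖t • θ‖ := by rw [hθnorm t ht0]; exact ht
    have h2 := (hcomp _ h1).1
    have h3 := hgpos _ h1
    have : 0 < (1 / c) * g ‖t • θ‖ := by positivity
    linarith
  -- integrability of the product for large t
  have hint_prod : ∀ t : ℝ, 2 * A ≤ t → Integrable (fun y => f (t • θ - y) * f y) := by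
    intro t ht
    have ht0 : (0:ℝ) ≤ t := by linarith
    have htA : A ≤ t / 2 := by linarith
    have hshift : Integrable (fun y => f (t • θ - y)) := hfint.comp_sub_left _
    have hbd : Integrable (fun y => c * g A * (f y + f (t • θ - y))) :=
      (hfint.add hshift).const_mul _
    refine hbd.mono' (hshift.aestronglyMeasurable.mul hmeas) ?_
    filter_upwards with y
    have htri : t ≤ ‖y‖ + ‖t • θ - y‖ := by
      have h1 := norm_add_le y (t • θ - y)
      have h2 : y + (t • θ - y) = t • θ := by abel
      rw [h2, hθnorm t ht0] at h1
      exact h1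
    have key : ∀ z : EuclideanSpace ℝ (Fin d), t / 2 ≤ ‖z‖ → f z ≤ c * g A := by
      intro z hz
      have hAz : A ≤ ‖z‖ := le_trans htA hz
      have h1 := (hcomp z hAz).2
      have h2 := hgdec A ‖z‖ le_rfl hAz
      nlinarith
    rw [Real.norm_eq_abs, abs_of_nonneg (mul_nonneg (hf0 _) (hf0 _))]
    rcases le_or_gt (t / 2) ‖y‖ with hy | hy
    · have h1 := key y hy
      have h2 := hf0 (t • θ - y)
      have h3 := hf0 y
      have h4 : 0 < g A := hgpos A le_rfl
      nlinarith
    · have h2' : t / 2 ≤ ‖t • θ - y‖ := by linarith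
      have h1 := key _ h2'
      have h2 := hf0 (t • θ - y)
      have h3 := hf0 y
      have h4 : 0 < g A := hgpos A le_rfl
      nlinarith
  -- measurable sets
  have hSmeas : MeasurableSet {y : EuclideanSpace ℝ (Fin d) | ‖y‖ ≤ r} :=
    measurableSet_le measurable_norm measurable_const
  have hSmeas' : ∀ t : ℝ, MeasurableSet {y : EuclideanSpace ℝ (Fin d) | ‖t • θ - y‖ ≤ r} := by
    intro t
    exact measurableSet_le ((measurable_const.sub measurable_id).norm) measurable_const
  have hRmeas : MeasurableSet {y : EuclideanSpace ℝ (Fin d) | r < ‖y‖} :=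
    measurableSet_lt measurable_const measurable_norm
  -- swap identity : integral over {‖tθ-y‖ ≤ r} equals integral over {‖y‖ ≤ r}
  have hswap : ∀ t : ℝ,
      (∫ y in {y : EuclideanSpace ℝ (Fin d) | ‖t • θ - y‖ ≤ r}, f (t • θ - y) * f y) =
      ∫ y in {y : EuclideanSpace ℝ (Fin d) | ‖y‖ ≤ r}, f (t • θ - y) * f y := by
    intro t
    have key := integral_sub_left_eq_self
      (fun y => Set.indicator {y : EuclideanSpace ℝ (Fin d) | ‖y‖ ≤ r}
        (fun y => f y * f (t • θ - y)) y) volume (t • θ)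
    have h1 : (fun x : EuclideanSpace ℝ (Fin d) =>
        Set.indicator {y : EuclideanSpace ℝ (Fin d) | ‖y‖ ≤ r}
          (fun y => f y * f (t • θ - y)) (t • θ - x)) =
        fun x => Set.indicator {y : EuclideanSpace ℝ (Fin d) | ‖t • θ - y‖ ≤ r}
          (fun y => f (t • θ - y) * f y) x := by
      funext x
      by_cases hx : (t • θ - x) ∈ {y : EuclideanSpace ℝ (Fin d) | ‖y‖ ≤ r}
      · rw [Set.indicator_of_mem hx,
          Set.indicator_of_mem (show x ∈ {y : EuclideanSpace ℝ (Fin d) | ‖t • θ - y‖ ≤ r}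
            from hx), sub_sub_cancel]
      · rw [Set.indicator_of_notMem hx,
          Set.indicator_of_notMem (show x ∉ {y : EuclideanSpace ℝ (Fin d) | ‖t • θ - y‖ ≤ r}
            from hx)]
    rw [h1] at key
    rw [← integral_indicator (hSmeas' t), ← integral_indicator hSmeas, key]
    congr 1
    funext y
    by_cases hy : y ∈ {y : EuclideanSpace ℝ (Fin d) | ‖y‖ ≤ r}
    · rw [Set.indicator_of_mem hy, Set.indicator_of_mem hy, mul_comm]
    · rw [Set.indicator_of_notMem hy, Set.indicator_of_notMem hy]
  -- dominated convergence on the ball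
  have hball : Tendsto (fun t : ℝ =>
      ∫ y in {y : EuclideanSpace ℝ (Fin d) | ‖y‖ ≤ r}, f (t • θ - y) * f y / f (t • θ)) atTop
      (nhds (∫ y in {y : EuclideanSpace ℝ (Fin d) | ‖y‖ ≤ r},
        Real.exp (γ * ⟪θ, y⟫_ℝ) * f y)) := by
    have hrθ : Tendsto (fun t : ℝ => f (t • θ - r • θ) / f (t • θ)) atTop
        (nhds (Real.exp (γ * r))) := by
      have := hc1 (r • θ)
      have hip : ⟪θ, r • θ⟫_ℝ = r := by
        rw [real_inner_smul_right, real_inner_self_eq_norm_sq, hθ]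
        ring
      rwa [hip] at this
    have hev : ∀ᶠ t : ℝ in atTop,
        f (t • θ - r • θ) / f (t • θ) < Real.exp (γ * r) + 1 :=
      hrθ.eventually (eventually_lt_nhds (by linarith [Real.exp_pos (γ * r)] :
        Real.exp (γ * r) < Real.exp (γ * r) + 1))
    set B : ℝ := c ^ 2 * (Real.exp (γ * r) + 1) with hB
    apply tendsto_integral_filter_of_dominated_convergence (fun y => B * f y)
    · filter_upwards with t
      exact ((((hfint.comp_sub_left (t • θ)).aestronglyMeasurable.mul
        hmeas).mul_const (f (t • θ))⁻¹).congr
        (Eventually.of_forall fun y => (div_eq_mul_inv _ _).symm)).restrict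
    · filter_upwards [eventually_ge_atTop (2 * A + 2 * r), hev] with t ht hevt
      have ht0 : (0:ℝ) ≤ t := by linarith
      have htr : A ≤ t - r := by linarith
      have htA : A ≤ t := by linarith
      have hft := hfpos t htA
      refine (ae_restrict_iff' hSmeas).2 ?_
      filter_upwards with y hy
      have hy' : ‖y‖ ≤ r := hy
      have hnorm1 : t - r ≤ ‖t • θ - y‖ := by
        have h1 := norm_sub_norm_le (t • θ) y
        rw [hθnorm t ht0] at h1
        linarith
      have hAty : A ≤ ‖t • θ - y‖ := le_trans htr hnorm1
      have h1 : f (t • θ - y) ≤ c * g ‖t • θ - y‖ := (hcomp _ hAty).2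
      have h2 : g ‖t • θ - y‖ ≤ g (t - r) := hgdec _ _ htr hnorm1
      have hts : t • θ - r • θ = (t - r) • θ := by rw [sub_smul]
      have h3 : (1 / c) * g (t - r) ≤ f (t • θ - r • θ) := by
        have hn : ‖t • θ - r • θ‖ = t - r := by
          rw [hts, hθnorm (t - r) (by linarith)]
        have := (hcomp (t • θ - r • θ) (by rw [hn]; exact htr)).1
        rwa [hn] at this
      have h4 : f (t • θ - r • θ) ≤ (Real.exp (γ * r) + 1) * f (t • θ) := by
        rw [div_lt_iff₀ hft] at hevt
        linarith
      have hg1 : g (t - r) ≤ c * f (t • θ - r • θ) := by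
        have h3' := mul_le_mul_of_nonneg_left h3 hc0.le
        rw [← mul_assoc, mul_one_div, div_self hc0.ne', one_mul] at h3'
        exact h3'
      have h5 : f (t • θ - y) ≤ B * f (t • θ) := by
        calc f (t • θ - y) ≤ c * g ‖t • θ - y‖ := h1
          _ ≤ c * g (t - r) := mul_le_mul_of_nonneg_left h2 hc0.le
          _ ≤ c * (c * f (t • θ - r • θ)) := mul_le_mul_of_nonneg_left hg1 hc0.le
          _ ≤ c * (c * ((Real.exp (γ * r) + 1) * f (t • θ))) :=
            mul_le_mul_of_nonneg_left (mul_le_mul_of_nonneg_left h4 hc0.le) hc0.le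
          _ = B * f (t • θ) := by rw [hB]; ring
      rw [Real.norm_eq_abs, abs_of_nonneg
        (div_nonneg (mul_nonneg (hf0 _) (hf0 _)) hft.le)]
      rw [div_le_iff₀ hft]
      calc f (t • θ - y) * f y ≤ (B * f (t • θ)) * f y :=
            mul_le_mul_of_nonneg_right h5 (hf0 y)
        _ = B * f y * f (t • θ) := by ring
    · exact (hfint.const_mul B).restrict
    · refine (ae_restrict_iff' hSmeas).2 ?_
      filter_upwards with y _
      have := (hc1 y).mul_const (f y)
      simpa [mul_div_right_comm] using this
  -- positivity of f(tθ) eventually, plus decomposition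
  have hJ : (∫ y in {y : EuclideanSpace ℝ (Fin d) | ‖y‖ ≤ r},
      Real.exp (γ * ⟪θ, y⟫_ℝ) * f y) =
      h - ∫ y in {y : EuclideanSpace ℝ (Fin d) | r < ‖y‖}, Real.exp (γ * ⟪θ, y⟫_ℝ) * f y := by
    have hcpl : {y : EuclideanSpace ℝ (Fin d) | r < ‖y‖}ᶜ
        = {y : EuclideanSpace ℝ (Fin d) | ‖y‖ ≤ r} := by
      ext y; simp [not_lt]
    have := integral_add_compl hRmeas hexp
    rw [hcpl, hh] at this
    linarith
  have hlim : Tendsto (fun t : ℝ =>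
      (∫ y, f (t • θ - y) * f y) / f (t • θ) -
      2 * ∫ y in {y : EuclideanSpace ℝ (Fin d) | ‖y‖ ≤ r},
        f (t • θ - y) * f y / f (t • θ)) atTop
      (nhds (2 * ∫ y in {y : EuclideanSpace ℝ (Fin d) | r < ‖y‖},
        Real.exp (γ * ⟪θ, y⟫_ℝ) * f y)) := by
    have h0 := hc2.sub (hball.const_mul 2)
    have heq : 2 * h - 2 * ∫ y in {y : EuclideanSpace ℝ (Fin d) | ‖y‖ ≤ r},
          Real.exp (γ * ⟪θ, y⟫_ℝ) * f y =
        2 * ∫ y in {y : EuclideanSpace ℝ (Fin d) | r < ‖y‖},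
          Real.exp (γ * ⟪θ, y⟫_ℝ) * f y := by
      rw [hJ]; ring
    rwa [heq] at h0
  refine Tendsto.congr' ?_ hlim
  filter_upwards [eventually_ge_atTop (2 * A + 2 * r + 1)] with t ht
  have ht0 : (0:ℝ) ≤ t := by linarith
  have htA : A ≤ t := by linarith
  have ht2A : 2 * A ≤ t := by linarith
  have ht2r : 2 * r < t := by linarith
  have hft := hfpos t htA
  have hint := hint_prod t ht2A
  -- set decomposition
  set S₁ : Set (EuclideanSpace ℝ (Fin d)) := {y | ‖t • θ - y‖ ≤ r}
  set S₂ : Set (EuclideanSpace ℝ (Fin d)) := {y | ‖y‖ ≤ r}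
  have hdisj : Disjoint S₁ S₂ := by
    rw [Set.disjoint_left]
    intro y hy1 hy2
    have hy1' : ‖t • θ - y‖ ≤ r := hy1
    have hy2' : ‖y‖ ≤ r := hy2
    have h1 := norm_add_le (t • θ - y) y
    have h2 : t • θ - y + y = t • θ := by abel
    rw [h2, hθnorm t ht0] at h1
    linarith
  have hcompl : ({y : EuclideanSpace ℝ (Fin d) | r < ‖t • θ - y‖ ∧ r < ‖y‖}) = (S₁ ∪ S₂)ᶜ := by
    ext y
    simp only [Set.mem_setOf_eq, Set.mem_compl_iff, Set.mem_union, S₁, S₂, not_or, not_le]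
  have hunion : MeasurableSet (S₁ ∪ S₂) := (hSmeas' t).union hSmeas
  have hdecomp : (∫ y in (S₁ ∪ S₂)ᶜ, f (t • θ - y) * f y) =
      (∫ y, f (t • θ - y) * f y) - (∫ y in S₁, f (t • θ - y) * f y)
        - (∫ y in S₂, f (t • θ - y) * f y) := by
    have h1 := integral_add_compl hunion hint
    have h2 : (∫ y in S₁ ∪ S₂, f (t • θ - y) * f y) =
        (∫ y in S₁, f (t • θ - y) * f y) + (∫ y in S₂, f (t • θ - y) * f y) :=
      setIntegral_union hdisj hSmeas hint.integrableOn hint.integrableOn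
    linarith
  simp only [hcompl]
  rw [hdecomp, hswap t]
  rw [integral_div, sub_div, sub_div]
  ring
end

section
/- Let d ≥ 2, m > 0, β > (d+1)/2. Then ∫_{|y|>r, y₁>0} e^{m(y₁ − |y|)} |y|^{-β} dy ≤ C r^{(d+1)/2 − β} for all r > 1, where C depends only on d, m, β. -/
open Filter MeasureTheory Real Set
open scoped ENNReal



-- polynomial vs exponential bound
lemma aux_pow_le_exp (c p : ℝ) (hc : 0 < c) :
    ∃ K : ℝ, 0 < K ∧ ∀ s : ℝ, 1 ≤ s → s ^ p ≤ K * Real.exp (c * s) := by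
  rcases le_or_gt p 0 with hp | hp
  · refine ⟨1, one_pos, fun s hs => ?_⟩
    have h1 : s ^ p ≤ 1 := Real.rpow_le_one_of_one_le_of_nonpos hs hp
    have h2 : (1:ℝ) ≤ Real.exp (c * s) := by
      have : 0 ≤ c * s := by positivity
      simpa using Real.exp_le_exp.mpr this
    nlinarith
  · refine ⟨(p / c) ^ p, by positivity, fun s hs => ?_⟩
    have hs0 : (0:ℝ) ≤ s := by linarith
    have h1 : s ≤ (p / c) * Real.exp (c * s / p) := by
      have h2 : c * s / p ≤ Real.exp (c * s / p) :=
        le_trans (by linarith [Real.add_one_le_exp (c * s / p)]) le_rfl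
      have := mul_le_mul_of_nonneg_left h2 (le_of_lt (div_pos hp hc))
      calc s = (p / c) * (c * s / p) := by field_simp
        _ ≤ (p / c) * Real.exp (c * s / p) := this
    calc s ^ p ≤ ((p / c) * Real.exp (c * s / p)) ^ p :=
        Real.rpow_le_rpow hs0 h1 hp.le
      _ = (p / c) ^ p * Real.exp (c * s) := by
        rw [Real.mul_rpow (by positivity) (Real.exp_pos _).le, ← Real.exp_mul]
        congr 2
        field_simp

-- inversion: from a ≤ K e^x deduce e^{-x} ≤ K a⁻¹
lemma aux_exp_neg_le {a K x : ℝ} (ha : 0 < a) (hK : 0 < K) (h : a ≤ K * Real.exp x) :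
    Real.exp (-x) ≤ K * a⁻¹ := by
  rw [Real.exp_neg]
  rw [inv_le_iff_one_le_mul₀ (Real.exp_pos x)]
  nlinarith [mul_inv_cancel₀ (ne_of_gt ha), Real.exp_pos x]

lemma aux_integrable_gauss {n : ℕ} {b : ℝ} (hb : 0 < b) :
    Integrable (fun v : EuclideanSpace ℝ (Fin n) => Real.exp (-b * ‖v‖ ^ 2)) := by
  have h := GaussianFourier.integrable_cexp_neg_mul_sq_norm_add
    (V := EuclideanSpace ℝ (Fin n)) (b := (b : ℂ)) (by simpa using hb) 0 0
  have h2 := h.norm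
  refine h2.congr (Filter.Eventually.of_forall fun v => ?_)
  show ‖Complex.exp _‖ = _
  rw [Complex.norm_exp]
  have : ((-(b:ℂ)) * (‖v‖:ℂ) ^ 2 + 0 * ((inner ℝ (0:EuclideanSpace ℝ (Fin n)) v : ℝ) : ℂ)).re
      = -b * ‖v‖ ^ 2 := by
    rw [show (-(b:ℂ)) * ((‖v‖:ℝ):ℂ) ^ 2 = ((-b * ‖v‖^2 : ℝ) : ℂ) by push_cast; ring]
    simp only [zero_mul, mul_zero, add_zero, Complex.ofReal_re]
  rw [this]

lemma aux_lintegral_gauss {n : ℕ} {b : ℝ} (hb : 0 < b) :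
    ∫⁻ v : EuclideanSpace ℝ (Fin n), ENNReal.ofReal (Real.exp (-b * ‖v‖ ^ 2)) =
      ENNReal.ofReal ((Real.pi / b) ^ ((n : ℝ) / 2)) := by
  rw [← MeasureTheory.ofReal_integral_eq_lintegral_ofReal (aux_integrable_gauss hb)
    (Filter.Eventually.of_forall fun v => (Real.exp_pos _).le)]
  rw [GaussianFourier.integral_rexp_neg_mul_sq_norm hb]
  norm_num [finrank_euclideanSpace_fin]

lemma aux_lintegral_gauss_pi {n : ℕ} {b : ℝ} (hb : 0 < b) :
    ∫⁻ x : Fin n → ℝ, ENNReal.ofReal (Real.exp (-b * ∑ i, (x i) ^ 2)) =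
      ENNReal.ofReal ((Real.pi / b) ^ ((n : ℝ) / 2)) := by
  have hmp := (EuclideanSpace.volume_preserving_symm_measurableEquiv_toLp (Fin n))
  have h := hmp.lintegral_comp_emb (MeasurableEquiv.measurableEmbedding _)
    (fun x : Fin n → ℝ => ENNReal.ofReal (Real.exp (-b * ∑ i, (x i) ^ 2)))
  rw [← h, ← aux_lintegral_gauss hb]
  apply lintegral_congr
  intro v
  congr 2
  have h1 : ∑ i, ((MeasurableEquiv.toLp 2 (Fin n → ℝ)).symm v i) ^ 2 = ‖v‖ ^ 2 := by
    rw [EuclideanSpace.norm_eq, Real.sq_sqrt (by positivity)]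
    apply Finset.sum_congr rfl
    intro i _
    rw [Real.norm_eq_abs, sq_abs]
    rfl
  rw [h1]

section
variable {n : ℕ}

noncomputable def eqv (i0 : Fin (n+1)) : (ℝ × (Fin n → ℝ)) ≃ᵐ EuclideanSpace ℝ (Fin (n+1)) :=
  ((MeasurableEquiv.piFinSuccAbove (fun _ : Fin (n+1) => ℝ) i0).symm).trans
    (MeasurableEquiv.toLp 2 (Fin (n+1) → ℝ)).symm.symm

lemma eqv_pres (i0 : Fin (n+1)) : MeasurePreserving (eqv i0) volume volume := by
  have h1 : MeasurePreserving (MeasurableEquiv.piFinSuccAbove (fun _ : Fin (n+1) => ℝ) i0).symm :=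
    (volume_preserving_piFinSuccAbove (fun _ : Fin (n+1) => ℝ) i0).symm
  have h2 : MeasurePreserving (MeasurableEquiv.toLp 2 (Fin (n+1) → ℝ)).symm.symm :=
    (EuclideanSpace.volume_preserving_symm_measurableEquiv_toLp _).symm
  have := h2.comp h1
  simpa [eqv, MeasurableEquiv.coe_trans] using this

lemma eqv_coord (i0 : Fin (n+1)) (p : ℝ × (Fin n → ℝ)) : (eqv i0 p) i0 = p.1 := by
  simp [eqv, MeasurableEquiv.piFinSuccAbove_symm_apply, Fin.insertNthEquiv,
    Fin.insertNth_apply_same, MeasurableEquiv.coe_toLp]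

lemma eqv_coord' (i0 : Fin (n+1)) (p : ℝ × (Fin n → ℝ)) (j : Fin n) :
    (eqv i0 p) (i0.succAbove j) = p.2 j := by
  simp [eqv, MeasurableEquiv.piFinSuccAbove_symm_apply, Fin.insertNthEquiv,
    Fin.insertNth_apply_succAbove, MeasurableEquiv.coe_toLp]

lemma eqv_norm (i0 : Fin (n+1)) (p : ℝ × (Fin n → ℝ)) :
    ‖eqv i0 p‖ = Real.sqrt (p.1 ^ 2 + ∑ i, (p.2 i) ^ 2) := by
  rw [EuclideanSpace.norm_eq]
  congr 1
  rw [Fin.sum_univ_succAbove (fun j => ‖(eqv i0 p) j‖ ^ 2) i0]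
  rw [eqv_coord]
  congr 1
  · rw [Real.norm_eq_abs, sq_abs]
  · apply Finset.sum_congr rfl
    intro j _
    rw [eqv_coord', Real.norm_eq_abs, sq_abs]

end


set_option maxHeartbeats 1600000 in
theorem stmt14 (d : ℕ) (hd : 2 ≤ d) (m β : ℝ) (hm : 0 < m)
    (hβ : ((d : ℝ) + 1) / 2 < β) :
    ∃ C : ℝ, 0 < C ∧ ∀ r : ℝ, 1 < r →
      (∫⁻ y : EuclideanSpace ℝ (Fin d) in
          {y | r < ‖y‖ ∧ 0 < y ⟨0, by omega⟩},
        ENNReal.ofReal (Real.exp (m * (y ⟨0, by omega⟩ - ‖y‖)) * ‖y‖ ^ (-β))) ≤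
      ENNReal.ofReal (C * r ^ (((d : ℝ) + 1) / 2 - β)) := by
  obtain ⟨n, rfl⟩ : ∃ n, d = n + 1 := ⟨d - 1, by omega⟩
  have hβ' : (n : ℝ) / 2 + 1 < β := by push_cast at hβ; linarith
  have hβ0 : 0 < β := by have : (0:ℝ) ≤ (n:ℝ) := Nat.cast_nonneg n; linarith
  set i0 : Fin (n + 1) := ⟨0, by omega⟩ with hi0def
  set s : ℝ := ((n : ℝ) + 2) / 2 - β with hsdef
  have hsneg : s < 0 := by rw [hsdef]; push_cast; linarith
  set p : ℝ := (n : ℝ) / 2 - β with hpdef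
  have hp : p < -1 := by rw [hpdef]; linarith
  have hps : s = p + 1 := by rw [hsdef, hpdef]; ring
  set K₁ : ℝ := (4 * π / m) ^ ((n : ℝ) / 2) with hK₁def
  have hK₁ : 0 < K₁ := by rw [hK₁def]; positivity
  obtain ⟨K₂, hK₂, hK₂'⟩ := aux_pow_le_exp (m / 4) ((n : ℝ) + 2) (by positivity)
  obtain ⟨K₃, hK₃, hK₃'⟩ := aux_pow_le_exp (m / 4) (β - ((n : ℝ) + 2) / 2) (by positivity)
  set J : ℝ≥0∞ := ∫⁻ y : EuclideanSpace ℝ (Fin (n + 1)),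
      ENNReal.ofReal ((1 + ‖y‖) ^ (-((n : ℝ) + 2))) with hJdef
  have hJ : J < ∞ := by
    rw [hJdef]
    apply finite_integral_one_add_norm
    rw [finrank_euclideanSpace_fin]
    push_cast; linarith
  set CA : ℝ := K₁ * (2 : ℝ) ^ (-s) / (β - ((n : ℝ) / 2 + 1)) with hCAdef
  have hCA : 0 ≤ CA := by
    rw [hCAdef]
    apply div_nonneg (by positivity) (by linarith)
  set CB : ℝ := Real.exp (m / 4) * K₂ * K₃ * J.toReal with hCBdef
  have hCB : 0 ≤ CB := by rw [hCBdef]; positivity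
  refine ⟨CA + CB + 1, by linarith, fun r hr => ?_⟩
  have hr0 : 0 < r := by linarith
  have hr2 : 0 < r / 2 := by linarith
  set g : EuclideanSpace ℝ (Fin (n + 1)) → ℝ≥0∞ :=
    fun y => ENNReal.ofReal (Real.exp (m * (y i0 - ‖y‖)) * ‖y‖ ^ (-β)) with hgdef
  have hexpgoal : ((↑(n + 1) : ℝ) + 1) / 2 - β = s := by rw [hsdef]; push_cast; ring
  rw [hexpgoal]
  show ∫⁻ y in {y : EuclideanSpace ℝ (Fin (n+1)) | r < ‖y‖ ∧ 0 < y i0}, g y ≤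
    ENNReal.ofReal ((CA + CB + 1) * r ^ s)
  have hcoordMeas : Measurable (fun y : EuclideanSpace ℝ (Fin (n + 1)) => y i0) :=
    (measurable_pi_apply i0).comp (MeasurableEquiv.toLp 2 (Fin (n+1) → ℝ)).symm.measurable
  set SA : Set (EuclideanSpace ℝ (Fin (n + 1))) :=
    {y | (r < ‖y‖ ∧ 0 < y i0) ∧ ‖y‖ ≤ 2 * y i0} with hSAdef
  set SB : Set (EuclideanSpace ℝ (Fin (n + 1))) :=
    {y | (r < ‖y‖ ∧ 0 < y i0) ∧ 2 * y i0 < ‖y‖} with hSBdef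
  have hsplit : ∫⁻ y in {y : EuclideanSpace ℝ (Fin (n+1)) | r < ‖y‖ ∧ 0 < y i0}, g y ≤
      (∫⁻ y in SA, g y) + ∫⁻ y in SB, g y := by
    refine le_trans (lintegral_mono_set ?_) (lintegral_union_le _ _ _)
    intro y hy
    rcases le_or_gt ‖y‖ (2 * y i0) with h | h
    · exact Or.inl ⟨hy, h⟩
    · exact Or.inr ⟨hy, h⟩
  have hApart : ∫⁻ y in SA, g y ≤ ENNReal.ofReal (CA * r ^ s) := by
    set hAfun : ℝ × (Fin n → ℝ) → ℝ≥0∞ := fun q =>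
      ENNReal.ofReal (Real.exp (-(m / (4 * q.1)) * ∑ i, (q.2 i) ^ 2) * q.1 ^ (-β))
      with hAfundef
    have hAfunMeas : Measurable hAfun := by
      rw [hAfundef]; fun_prop
    have htrans : ∫⁻ y in SA, g y = ∫⁻ q in (eqv i0) ⁻¹' SA, g (eqv i0 q) :=
      ((eqv_pres i0).setLIntegral_comp_preimage_emb
        (MeasurableEquiv.measurableEmbedding _) g SA).symm
    rw [htrans]
    have hsub : (eqv i0) ⁻¹' SA ⊆ (Ioi (r / 2)) ×ˢ (univ : Set (Fin n → ℝ)) := by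
      rintro q ⟨⟨hq1, hq2⟩, hq3⟩
      have h1 : r < 2 * (eqv i0 q) i0 := lt_of_lt_of_le hq1 hq3
      rw [eqv_coord] at h1
      exact ⟨by simp only [mem_Ioi]; linarith, mem_univ _⟩
    have hkey : ∀ t : ℝ, ∀ R : ℝ, ∀ Q : ℝ, 0 ≤ Q → r < R → 0 < t → R ≤ 2 * t →
        R ^ 2 = t ^ 2 + Q →
        Real.exp (m * (t - R)) * R ^ (-β) ≤
          Real.exp (-(m / (4 * t)) * Q) * t ^ (-β) := by
      intro t R Q hQ hq1 hq2 hq3 hR2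
      have hR0 : 0 < R := lt_trans hr0 hq1
      have htR : t ≤ R := by nlinarith
      have h4t : R + t ≤ 4 * t := by linarith
      have hq' : R - t = Q / (R + t) := by
        rw [eq_div_iff (by positivity)]; nlinarith
      have hge : Q / (4 * t) ≤ R - t := by
        rw [hq']
        apply div_le_div_of_nonneg_left hQ (by positivity) h4t
      have hexp : m * (t - R) ≤ -(m / (4 * t)) * Q := by
        have h5 : t - R ≤ -(Q / (4 * t)) := by linarith
        calc m * (t - R) ≤ m * (-(Q / (4 * t))) :=
              mul_le_mul_of_nonneg_left h5 hm.le
          _ = -(m / (4 * t)) * Q := by ring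
      have hrp : R ^ (-β) ≤ t ^ (-β) :=
        Real.rpow_le_rpow_of_nonpos hq2 htR (by linarith)
      exact mul_le_mul (Real.exp_le_exp.mpr hexp) hrp
        (Real.rpow_nonneg hR0.le _) (Real.exp_pos _).le
    have hpt : ∀ q ∈ (eqv i0) ⁻¹' SA, g (eqv i0 q) ≤ hAfun q := by
      rintro q ⟨⟨hq1, hq2⟩, hq3⟩
      rw [eqv_coord] at hq2 hq3
      have hR2 : ‖eqv i0 q‖ ^ 2 = q.1 ^ 2 + ∑ i, (q.2 i) ^ 2 := by
        rw [eqv_norm]; exact Real.sq_sqrt (by positivity)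
      simp only [hgdef, hAfundef]
      rw [eqv_coord]
      exact ENNReal.ofReal_le_ofReal
        (hkey q.1 ‖eqv i0 q‖ _ (by positivity) hq1 hq2 hq3 hR2)
    calc ∫⁻ q in (eqv i0) ⁻¹' SA, g (eqv i0 q)
        ≤ ∫⁻ q in (eqv i0) ⁻¹' SA, hAfun q := setLIntegral_mono hAfunMeas hpt
      _ ≤ ∫⁻ q in (Ioi (r / 2)) ×ˢ (univ : Set (Fin n → ℝ)), hAfun q :=
          lintegral_mono_set hsub
      _ = ∫⁻ t in Ioi (r / 2), ∫⁻ x, hAfun (t, x) := by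
          rw [MeasureTheory.Measure.volume_eq_prod, ← Measure.prod_restrict, Measure.restrict_univ]
          exact lintegral_prod _ hAfunMeas.aemeasurable
      _ = ∫⁻ t in Ioi (r / 2), ENNReal.ofReal (K₁ * t ^ p) := by
          apply setLIntegral_congr_fun_ae measurableSet_Ioi
          apply ae_of_all
          intro t ht
          have ht0 : 0 < t := lt_trans hr2 ht
          have hb : 0 < m / (4 * t) := by positivity
          calc ∫⁻ x, hAfun (t, x)
              = ∫⁻ x : Fin n → ℝ, ENNReal.ofReal (t ^ (-β)) *
                  ENNReal.ofReal (Real.exp (-(m / (4 * t)) * ∑ i, (x i) ^ 2)) := by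
                apply lintegral_congr
                intro x
                rw [hAfundef]
                simp only []
                rw [mul_comm (Real.exp _) _, ENNReal.ofReal_mul (Real.rpow_nonneg ht0.le _)]
            _ = ENNReal.ofReal (t ^ (-β)) *
                  ENNReal.ofReal ((π / (m / (4 * t))) ^ ((n : ℝ) / 2)) := by
                rw [lintegral_const_mul _ (by fun_prop), aux_lintegral_gauss_pi hb]
            _ = ENNReal.ofReal (K₁ * t ^ p) := by
                rw [← ENNReal.ofReal_mul (Real.rpow_nonneg ht0.le _)]
                congr 1
                have hπ : π / (m / (4 * t)) = (4 * π / m) * t := by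
                  field_simp
                rw [hπ, Real.mul_rpow (by positivity) ht0.le, hK₁def]
                rw [hpdef, show (n : ℝ) / 2 - β = (n : ℝ) / 2 + (-β) by ring,
                  Real.rpow_add ht0]
                ring
      _ = ENNReal.ofReal K₁ * ∫⁻ t in Ioi (r / 2), ENNReal.ofReal (t ^ p) := by
          simp_rw [ENNReal.ofReal_mul hK₁.le]
          exact lintegral_const_mul _ (by fun_prop)
      _ = ENNReal.ofReal K₁ * ENNReal.ofReal (-(r / 2) ^ (p + 1) / (p + 1)) := by
          rw [← ofReal_integral_eq_lintegral_ofReal (integrableOn_Ioi_rpow_of_lt hp hr2)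
            ((ae_restrict_iff' measurableSet_Ioi).2 (ae_of_all _ fun t ht =>
              Real.rpow_nonneg (le_of_lt (lt_trans hr2 ht)) _))]
          rw [integral_Ioi_rpow_of_lt hp hr2]
      _ ≤ ENNReal.ofReal (CA * r ^ s) := by
          rw [← ENNReal.ofReal_mul hK₁.le]
          apply ENNReal.ofReal_le_ofReal
          have h1 : (r / 2 : ℝ) ^ (p + 1) = r ^ s * ((2:ℝ) ^ s)⁻¹ := by
            rw [← hps, Real.div_rpow hr0.le (by norm_num)]
            rw [div_eq_mul_inv]
          have h2 : (2:ℝ) ^ (-s) = ((2:ℝ) ^ s)⁻¹ := Real.rpow_neg (by norm_num) s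
          have h3 : β - ((n : ℝ) / 2 + 1) = -s := by rw [hsdef]; ring
          rw [h1, hCAdef, h2, h3, ← hps]
          simp only [div_eq_mul_inv, inv_neg]
          apply le_of_eq
          ring
  have hBpart : ∫⁻ y in SB, g y ≤ ENNReal.ofReal (CB * r ^ s) := by
    set Er : ℝ := Real.exp (m / 4) * K₂ * Real.exp (-(m / 4) * r) with hErdef
    have hEr : 0 ≤ Er := by rw [hErdef]; positivity
    have hmeasF : Measurable (fun y : EuclideanSpace ℝ (Fin (n + 1)) =>
        ENNReal.ofReal ((1 + ‖y‖) ^ (-((n : ℝ) + 2)))) := by fun_prop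
    have hpt : ∀ y ∈ SB, g y ≤ ENNReal.ofReal Er *
        ENNReal.ofReal ((1 + ‖y‖) ^ (-((n : ℝ) + 2))) := by
      rintro y ⟨⟨hyr, hy0⟩, hyB⟩
      have hR1 : 1 < ‖y‖ := lt_trans hr hyr
      have hR0 : 0 < ‖y‖ := by linarith
      have e1 : Real.exp (m * (y i0 - ‖y‖)) ≤
          Real.exp (-(m / 4) * r) * Real.exp (-(m / 4) * ‖y‖) := by
        rw [← Real.exp_add]
        apply Real.exp_le_exp.mpr
        nlinarith [hyr.le]
      have h3 : Real.exp (-(m / 4 * (1 + ‖y‖))) ≤ K₂ * (1 + ‖y‖) ^ (-((n : ℝ) + 2)) := by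
        have h2 := hK₂' (1 + ‖y‖) (by linarith)
        have h3 := aux_exp_neg_le (Real.rpow_pos_of_pos (by linarith) _) hK₂ h2
        rwa [← Real.rpow_neg (by linarith : (0:ℝ) ≤ 1 + ‖y‖)] at h3
      have e2 : Real.exp (-(m / 4) * ‖y‖) ≤
          Real.exp (m / 4) * K₂ * (1 + ‖y‖) ^ (-((n : ℝ) + 2)) := by
        calc Real.exp (-(m / 4) * ‖y‖)
            = Real.exp (m / 4) * Real.exp (-(m / 4 * (1 + ‖y‖))) := by
              rw [← Real.exp_add]; ring_nf
          _ ≤ Real.exp (m / 4) * (K₂ * (1 + ‖y‖) ^ (-((n : ℝ) + 2))) :=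
              mul_le_mul_of_nonneg_left h3 (Real.exp_pos _).le
          _ = Real.exp (m / 4) * K₂ * (1 + ‖y‖) ^ (-((n : ℝ) + 2)) := by ring
      have e3 : ‖y‖ ^ (-β) ≤ 1 :=
        Real.rpow_le_one_of_one_le_of_nonpos hR1.le (by linarith)
      have key : Real.exp (m * (y i0 - ‖y‖)) * ‖y‖ ^ (-β) ≤
          Er * (1 + ‖y‖) ^ (-((n : ℝ) + 2)) := by
        calc Real.exp (m * (y i0 - ‖y‖)) * ‖y‖ ^ (-β)
            ≤ (Real.exp (-(m / 4) * r) *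
                (Real.exp (m / 4) * K₂ * (1 + ‖y‖) ^ (-((n : ℝ) + 2)))) * 1 := by
              apply mul_le_mul _ e3 (Real.rpow_nonneg hR0.le _) (by positivity)
              exact le_trans e1 (mul_le_mul_of_nonneg_left e2 (Real.exp_pos _).le)
          _ = Er * (1 + ‖y‖) ^ (-((n : ℝ) + 2)) := by rw [hErdef]; ring
      rw [hgdef]
      calc ENNReal.ofReal (Real.exp (m * (y i0 - ‖y‖)) * ‖y‖ ^ (-β))
          ≤ ENNReal.ofReal (Er * (1 + ‖y‖) ^ (-((n : ℝ) + 2))) :=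
            ENNReal.ofReal_le_ofReal key
        _ = ENNReal.ofReal Er * ENNReal.ofReal ((1 + ‖y‖) ^ (-((n : ℝ) + 2))) :=
            ENNReal.ofReal_mul hEr
    have hErs : Er * J.toReal ≤ CB * r ^ s := by
      have h2 := hK₃' r hr.le
      have h3 := aux_exp_neg_le (Real.rpow_pos_of_pos hr0 _) hK₃ h2
      rw [← Real.rpow_neg hr0.le] at h3
      rw [show -(β - ((n : ℝ) + 2) / 2) = s by rw [hsdef]; ring] at h3
      rw [show -(m / 4 * r) = -(m / 4) * r by ring] at h3
      rw [hErdef, hCBdef]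
      calc Real.exp (m / 4) * K₂ * Real.exp (-(m / 4) * r) * J.toReal
          = (Real.exp (m / 4) * K₂ * J.toReal) * Real.exp (-(m / 4) * r) := by ring
        _ ≤ (Real.exp (m / 4) * K₂ * J.toReal) * (K₃ * r ^ s) := by
            apply mul_le_mul_of_nonneg_left h3 (by positivity)
        _ = Real.exp (m / 4) * K₂ * K₃ * J.toReal * r ^ s := by ring
    calc ∫⁻ y in SB, g y
        ≤ ∫⁻ y in SB, ENNReal.ofReal Er *
            ENNReal.ofReal ((1 + ‖y‖) ^ (-((n : ℝ) + 2))) :=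
          setLIntegral_mono (measurable_const.mul hmeasF) hpt
      _ ≤ ∫⁻ y, ENNReal.ofReal Er *
            ENNReal.ofReal ((1 + ‖y‖) ^ (-((n : ℝ) + 2))) :=
          setLIntegral_le_lintegral _ _
      _ = ENNReal.ofReal Er * J := lintegral_const_mul _ hmeasF
      _ = ENNReal.ofReal Er * ENNReal.ofReal J.toReal := by
          rw [ENNReal.ofReal_toReal hJ.ne]
      _ = ENNReal.ofReal (Er * J.toReal) := (ENNReal.ofReal_mul hEr).symm
      _ ≤ ENNReal.ofReal (CB * r ^ s) := ENNReal.ofReal_le_ofReal hErs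
  calc ∫⁻ y in {y : EuclideanSpace ℝ (Fin (n+1)) | r < ‖y‖ ∧ 0 < y i0}, g y
      ≤ (∫⁻ y in SA, g y) + ∫⁻ y in SB, g y := hsplit
    _ ≤ ENNReal.ofReal (CA * r ^ s) + ENNReal.ofReal (CB * r ^ s) :=
        add_le_add hApart hBpart
    _ = ENNReal.ofReal ((CA + CB) * r ^ s) := by
        rw [← ENNReal.ofReal_add (by positivity) (by positivity)]
        ring_nf
    _ ≤ ENNReal.ofReal ((CA + CB + 1) * r ^ s) := by
        apply ENNReal.ofReal_le_ofReal
        have : (0:ℝ) ≤ r ^ s := Real.rpow_nonneg hr0.le s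
        nlinarith
end

section
/- For the lower bound in the exponential profile example: let d ≥ 1, m > 0, β ≥ 0, g(s) = e^{-ms}(max(1,s))^{-β}, and x_n = (2n,0,...,0) with n > r > 1. Then ∫_{r < y₁ < n} g(|x_n − y|)g(|y|)/g(|x_n|) dy ≥ c ∫_r^n y₁^{(d-1)/2 − β} dy₁ for a constant c > 0 independent of n and r; consequently if β ≤ (d+1)/2 then sup_n of the left-hand side is infinite. -/
open Filter MeasureTheory Set
open scoped ENNReal


lemma ratio_bound_s16 {m β n t u v : ℝ} (hm : 0 < m) (hβ : 0 ≤ β)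
    (ht : 1 < t) (htn : t < n) (hu : 1 ≤ u) (hv : 1 ≤ v)
    (huv : u + v ≤ 2 * n + 1) (hu2 : u ≤ 2 * n) (hv2 : v ≤ 2 * t) :
    Real.exp (-m) * 2 ^ (-β) * t ^ (-β) ≤
      Real.exp (-m * u) * u ^ (-β) * (Real.exp (-m * v) * v ^ (-β)) /
        (Real.exp (-m * (2 * n)) * (2 * n) ^ (-β)) := by
  have hn1 : 1 < n := lt_trans ht htn
  have hD : 0 < Real.exp (-m * (2 * n)) * (2 * n) ^ (-β) := by positivity
  rw [le_div_iff₀ hD]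
  have e1 : Real.exp (-m) * Real.exp (-m * (2 * n)) ≤ Real.exp (-m * u) * Real.exp (-m * v) := by
    rw [← Real.exp_add, ← Real.exp_add]
    apply Real.exp_le_exp.2
    nlinarith
  have e2 : (2 * n) ^ (-β) ≤ u ^ (-β) :=
    Real.rpow_le_rpow_of_nonpos (by linarith) hu2 (neg_nonpos.2 hβ)
  have e3 : (2 : ℝ) ^ (-β) * t ^ (-β) = (2 * t) ^ (-β) :=
    (Real.mul_rpow (by norm_num) (by linarith)).symm
  have e4 : (2 * t) ^ (-β) ≤ v ^ (-β) :=
    Real.rpow_le_rpow_of_nonpos (by linarith) hv2 (neg_nonpos.2 hβ)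
  calc Real.exp (-m) * 2 ^ (-β) * t ^ (-β) * (Real.exp (-m * (2 * n)) * (2 * n) ^ (-β))
      = (Real.exp (-m) * Real.exp (-m * (2 * n))) * ((2 * t) ^ (-β) * (2 * n) ^ (-β)) := by
        rw [← e3]; ring
    _ ≤ (Real.exp (-m * u) * Real.exp (-m * v)) * (v ^ (-β) * u ^ (-β)) := by
        apply mul_le_mul e1 (mul_le_mul e4 e2 (by positivity) (by positivity)) (by positivity)
          (by positivity)
    _ = Real.exp (-m * u) * u ^ (-β) * (Real.exp (-m * v) * v ^ (-β)) := by ring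

lemma pointwise_bound (k : ℕ) {m β r n : ℝ} (hm : 0 < m) (hβ : 0 ≤ β) (hr : 1 < r) (hrn : r < n)
    (g : ℝ → ℝ) (hg : ∀ s : ℝ, g s = Real.exp (-m * s) * (max 1 s) ^ (-β))
    (y : EuclideanSpace ℝ (Fin (k+1))) (ht : y 0 ∈ Set.Ioo r n)
    (hz : ∀ j : Fin k, |y j.succ| < Real.sqrt (y 0 / (k+1))) :
    Real.exp (-m) * 2 ^ (-β) * (y 0) ^ (-β) ≤
      g ‖(2*n) • EuclideanSpace.single (0 : Fin (k+1)) (1:ℝ) - y‖ * g ‖y‖ /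
        g ‖(2*n) • EuclideanSpace.single (0 : Fin (k+1)) (1:ℝ)‖ := by
  set t := y 0 with htt
  have ht1 : 1 < t := lt_trans hr ht.1
  have htn : t < n := ht.2
  set s := ∑ j : Fin k, (y j.succ)^2 with hss
  have hs0 : 0 ≤ s := Finset.sum_nonneg fun j _ => sq_nonneg _
  have hst : s ≤ t := by
    have hb : ∀ j : Fin k, (y j.succ)^2 ≤ t / (k+1) := by
      intro j
      have h1 : (y j.succ)^2 < Real.sqrt (t / (k+1)) ^ 2 := by
        rw [← sq_abs]
        exact pow_lt_pow_left₀ (hz j) (abs_nonneg _) (by norm_num)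
      rw [Real.sq_sqrt (by positivity : (0:ℝ) ≤ t / (k+1))] at h1
      exact h1.le
    calc s ≤ ∑ _j : Fin k, t / (k+1) := Finset.sum_le_sum fun j _ => hb j
      _ = (k : ℝ) * (t / (k+1)) := by
          rw [Finset.sum_const, Finset.card_univ, Fintype.card_fin, nsmul_eq_mul]
      _ ≤ t := by
          rw [mul_comm, div_mul_eq_mul_div, div_le_iff₀ (by positivity)]
          nlinarith
  have hny : ‖y‖ = Real.sqrt (t^2 + s) := by
    rw [EuclideanSpace.norm_eq]
    congr 1
    rw [Fin.sum_univ_succ]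
    simp [Real.norm_eq_abs, sq_abs]
    rfl
  have hnxy : ‖(2*n) • EuclideanSpace.single (0 : Fin (k+1)) (1:ℝ) - y‖
      = Real.sqrt ((2*n - t)^2 + s) := by
    rw [EuclideanSpace.norm_eq]
    congr 1
    rw [Fin.sum_univ_succ]
    simp [Real.norm_eq_abs, sq_abs, EuclideanSpace.single_apply, Fin.succ_ne_zero]
    rfl
  have hnx : ‖(2*n) • EuclideanSpace.single (0 : Fin (k+1)) (1:ℝ)‖ = 2*n := by
    rw [norm_smul, EuclideanSpace.norm_single, norm_one, mul_one, Real.norm_eq_abs,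
      abs_of_pos (by linarith)]
  have hv1 : t ≤ ‖y‖ := by
    rw [hny]
    calc t = Real.sqrt (t^2) := (Real.sqrt_sq (by linarith)).symm
      _ ≤ Real.sqrt (t^2 + s) := Real.sqrt_le_sqrt (by linarith)
  have hv2 : ‖y‖ ≤ t + 1/2 := by
    rw [hny]
    calc Real.sqrt (t^2 + s) ≤ Real.sqrt ((t + 1/2)^2) := Real.sqrt_le_sqrt (by nlinarith)
      _ = t + 1/2 := Real.sqrt_sq (by linarith)
  have hu1 : 2*n - t ≤ ‖(2*n) • EuclideanSpace.single (0 : Fin (k+1)) (1:ℝ) - y‖ := by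
    rw [hnxy]
    calc 2*n - t = Real.sqrt ((2*n - t)^2) := (Real.sqrt_sq (by linarith)).symm
      _ ≤ Real.sqrt ((2*n - t)^2 + s) := Real.sqrt_le_sqrt (by linarith)
  have hu2 : ‖(2*n) • EuclideanSpace.single (0 : Fin (k+1)) (1:ℝ) - y‖ ≤ 2*n - t + 1/2 := by
    rw [hnxy]
    calc Real.sqrt ((2*n - t)^2 + s) ≤ Real.sqrt ((2*n - t + 1/2)^2) :=
        Real.sqrt_le_sqrt (by nlinarith)
      _ = 2*n - t + 1/2 := Real.sqrt_sq (by nlinarith)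
  set u := ‖(2*n) • EuclideanSpace.single (0 : Fin (k+1)) (1:ℝ) - y‖
  set v := ‖y‖
  have hu : 1 ≤ u := by nlinarith
  have hv : 1 ≤ v := by nlinarith
  rw [hg u, hg v, hg ‖(2*n) • EuclideanSpace.single (0 : Fin (k+1)) (1:ℝ)‖, hnx,
    max_eq_right hu, max_eq_right hv, max_eq_right (by nlinarith : (1:ℝ) ≤ 2*n)]
  exact ratio_bound_s16 hm hβ ht1 htn hu hv (by nlinarith) (by nlinarith) (by nlinarith)


lemma tonelli_slab (k : ℕ) (r n : ℝ) (f : ℝ → ℝ≥0∞) (hf : Measurable f) :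
    ∫⁻ p : ℝ × (Fin k → ℝ) in
        {p | p.1 ∈ Set.Ioo r n ∧ ∀ j, |p.2 j| < Real.sqrt (p.1 / (k+1))}, f p.1
      = ∫⁻ t in Set.Ioo r n,
          f t * (ENNReal.ofReal (2 * Real.sqrt (t / (k+1))))^k := by
  set a : ℝ → ℝ := fun t => Real.sqrt (t / (k+1)) with ha
  set S : Set (ℝ × (Fin k → ℝ)) := {p | p.1 ∈ Set.Ioo r n ∧ ∀ j, |p.2 j| < a p.1} with hS
  have hSopen : IsOpen S := by
    have h1 : IsOpen {p : ℝ × (Fin k → ℝ) | p.1 ∈ Set.Ioo r n} :=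
      isOpen_Ioo.preimage continuous_fst
    have h2 : ∀ j : Fin k, IsOpen {p : ℝ × (Fin k → ℝ) | |p.2 j| < a p.1} := fun j =>
      isOpen_lt (continuous_abs.comp ((continuous_apply j).comp continuous_snd))
        (Real.continuous_sqrt.comp (continuous_fst.div_const _))
    have : S = {p : ℝ × (Fin k → ℝ) | p.1 ∈ Set.Ioo r n} ∩
        ⋂ j : Fin k, {p : ℝ × (Fin k → ℝ) | |p.2 j| < a p.1} := by
      ext p; simp [hS, Set.mem_iInter]
    rw [this]
    exact h1.inter (isOpen_iInter_of_finite h2)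
  have hSmeas : MeasurableSet S := hSopen.measurableSet
  have hfm : Measurable fun p : ℝ × (Fin k → ℝ) => f p.1 := hf.comp measurable_fst
  rw [← lintegral_indicator hSmeas]
  rw [MeasureTheory.Measure.volume_eq_prod, lintegral_prod _ (hfm.indicator hSmeas).aemeasurable]
  rw [← lintegral_indicator measurableSet_Ioo]
  apply lintegral_congr
  intro t
  by_cases ht : t ∈ Set.Ioo r n
  · have hzset : MeasurableSet {z : Fin k → ℝ | ∀ j, |z j| < a t} := by
      have : {z : Fin k → ℝ | ∀ j, |z j| < a t}
          = Set.pi Set.univ (fun _ : Fin k => Set.Ioo (-(a t)) (a t)) := by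
        ext z; simp [abs_lt, Set.mem_pi]
      rw [this]
      exact MeasurableSet.univ_pi fun _ => measurableSet_Ioo
    have hind : ∀ z : Fin k → ℝ, S.indicator (fun p => f p.1) (t, z)
        = ({z : Fin k → ℝ | ∀ j, |z j| < a t}).indicator (fun _ => f t) z := by
      intro z
      by_cases hz : ∀ j, |z j| < a t
      · have hmem : (t, z) ∈ S := ⟨ht, hz⟩
        have hmem2 : z ∈ {z : Fin k → ℝ | ∀ j, |z j| < a t} := hz
        rw [Set.indicator_of_mem hmem, Set.indicator_of_mem hmem2]
      · have hmem : (t, z) ∉ S := fun h => hz h.2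
        have hmem2 : z ∉ {z : Fin k → ℝ | ∀ j, |z j| < a t} := hz
        rw [Set.indicator_of_notMem hmem, Set.indicator_of_notMem hmem2]
    simp_rw [hind]
    rw [lintegral_indicator hzset, setLIntegral_const]
    rw [Set.indicator_of_mem ht]
    congr 1
    have : {z : Fin k → ℝ | ∀ j, |z j| < a t}
        = Set.pi Set.univ (fun _ : Fin k => Set.Ioo (-(a t)) (a t)) := by
      ext z; simp [abs_lt, Set.mem_pi]
    rw [this, volume_pi_pi]
    simp only [Real.volume_Ioo, sub_neg_eq_add, Finset.prod_const, Finset.card_univ,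
      Fintype.card_fin]
    congr 2
    ring
  · rw [Set.indicator_of_notMem ht]
    have : ∀ z : Fin k → ℝ, S.indicator (fun p => f p.1) (t, z) = 0 := by
      intro z
      exact Set.indicator_of_notMem (fun h => ht h.1) _
    simp_rw [this, lintegral_zero]

lemma key (k : ℕ) {m β : ℝ} (hm : 0 < m) (hβ : 0 ≤ β)
    (g : ℝ → ℝ) (hg : ∀ s : ℝ, g s = Real.exp (-m * s) * (max 1 s) ^ (-β)) :
    ∃ c : ℝ, 0 < c ∧ ∀ r n : ℝ, 1 < r → r < n →
      ENNReal.ofReal (c * ∫ s in Set.Ioo r n, s ^ ((k:ℝ)/2 - β)) ≤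
        ∫⁻ y : EuclideanSpace ℝ (Fin (k+1)) in {y | r < y 0 ∧ y 0 < n},
          ENNReal.ofReal (g ‖(2*n) • EuclideanSpace.single (0 : Fin (k+1)) (1:ℝ) - y‖ * g ‖y‖ /
            g ‖(2*n) • EuclideanSpace.single (0 : Fin (k+1)) (1:ℝ)‖) := by
  have hsk : (0:ℝ) < Real.sqrt (k+1) := Real.sqrt_pos.2 (by positivity)
  set c1 : ℝ := Real.exp (-m) * 2 ^ (-β) with hc1
  have hc1pos : 0 < c1 := by positivity
  set c : ℝ := c1 * (2 / Real.sqrt (k+1))^k with hc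
  have hcpos : 0 < c := by positivity
  refine ⟨c, hcpos, ?_⟩
  intro r n hr hrn
  set ψ := (MeasurableEquiv.toLp 2 (Fin (k+1) → ℝ)).symm.trans
      (MeasurableEquiv.piFinSuccAbove (fun _ : Fin (k+1) => ℝ) 0) with hψdef
  have hψ : MeasurePreserving ψ :=
    (EuclideanSpace.volume_preserving_symm_measurableEquiv_toLp _).trans
      (volume_preserving_piFinSuccAbove (fun _ : Fin (k+1) => ℝ) 0)
  have hψapp : ∀ y : EuclideanSpace ℝ (Fin (k+1)), ψ y = (y 0, fun j => y j.succ) := by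
    intro y; exact Prod.ext rfl (funext fun j => rfl)
  set S : Set (ℝ × (Fin k → ℝ)) :=
    {p | p.1 ∈ Set.Ioo r n ∧ ∀ j, |p.2 j| < Real.sqrt (p.1 / (k+1))} with hS
  have hSmeas : MeasurableSet S := by
    have h1 : IsOpen {p : ℝ × (Fin k → ℝ) | p.1 ∈ Set.Ioo r n} :=
      isOpen_Ioo.preimage continuous_fst
    have h2 : ∀ j : Fin k, IsOpen {p : ℝ × (Fin k → ℝ) | |p.2 j| < Real.sqrt (p.1 / (k+1))} :=
      fun j =>
      isOpen_lt (continuous_abs.comp ((continuous_apply j).comp continuous_snd))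
        (Real.continuous_sqrt.comp (continuous_fst.div_const _))
    have : S = {p : ℝ × (Fin k → ℝ) | p.1 ∈ Set.Ioo r n} ∩
        ⋂ j : Fin k, {p : ℝ × (Fin k → ℝ) | |p.2 j| < Real.sqrt (p.1 / (k+1))} := by
      ext p; simp [hS, Set.mem_iInter]
    rw [this]
    exact (h1.inter (isOpen_iInter_of_finite h2)).measurableSet
  set f : ℝ → ℝ≥0∞ := fun t => ENNReal.ofReal (c1 * t ^ (-β)) with hf
  have hfm : Measurable f := by
    apply Measurable.ennreal_ofReal
    fun_prop
  have hRmeas : MeasurableSet (ψ ⁻¹' S) := ψ.measurable hSmeas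
  have hpre : ψ ⁻¹' S ⊆ {y : EuclideanSpace ℝ (Fin (k+1)) | r < y 0 ∧ y 0 < n} := by
    intro y hy
    have := hy.1
    rw [hψapp y] at this
    exact ⟨this.1, this.2⟩
  -- step 1 : lower bound by indicator
  have step1 : ∫⁻ y in {y : EuclideanSpace ℝ (Fin (k+1)) | r < y 0 ∧ y 0 < n},
      (ψ ⁻¹' S).indicator (fun y => f (y 0)) y ≤
      ∫⁻ y in {y : EuclideanSpace ℝ (Fin (k+1)) | r < y 0 ∧ y 0 < n},
        ENNReal.ofReal (g ‖(2*n) • EuclideanSpace.single (0 : Fin (k+1)) (1:ℝ) - y‖ * g ‖y‖ /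
          g ‖(2*n) • EuclideanSpace.single (0 : Fin (k+1)) (1:ℝ)‖) := by
    apply lintegral_mono
    intro y
    by_cases hy : y ∈ ψ ⁻¹' S
    · rw [Set.indicator_of_mem hy]
      have hyS := hy
      rw [Set.mem_preimage, hψapp y] at hyS
      exact ENNReal.ofReal_le_ofReal
        (pointwise_bound k hm hβ hr hrn g hg y hyS.1 hyS.2)
    · rw [Set.indicator_of_notMem hy]
      exact zero_le
  -- step 2 : compute the indicator integral
  have step2 : ∫⁻ y in {y : EuclideanSpace ℝ (Fin (k+1)) | r < y 0 ∧ y 0 < n},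
      (ψ ⁻¹' S).indicator (fun y => f (y 0)) y
      = ∫⁻ t in Set.Ioo r n, f t * (ENNReal.ofReal (2 * Real.sqrt (t / (k+1))))^k := by
    rw [lintegral_indicator hRmeas, Measure.restrict_restrict hRmeas,
      Set.inter_eq_left.2 hpre]
    have : ∫⁻ y in ψ ⁻¹' S, f (y 0) = ∫⁻ y in ψ ⁻¹' S, (fun p : ℝ × (Fin k → ℝ) => f p.1) (ψ y) := by
      apply lintegral_congr
      intro y
      rw [hψapp y]
    rw [this]
    exact (hψ.setLIntegral_comp_preimage_emb ψ.measurableEmbedding (fun p => f p.1) S).trans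
      (tonelli_slab k r n f hfm)
  -- step 3 : evaluate
  have step3 : ENNReal.ofReal (c * ∫ s in Set.Ioo r n, s ^ ((k:ℝ)/2 - β))
      = ∫⁻ t in Set.Ioo r n, f t * (ENNReal.ofReal (2 * Real.sqrt (t / (k+1))))^k := by
    have hInt : IntegrableOn (fun s : ℝ => c * s ^ ((k:ℝ)/2 - β)) (Set.Ioo r n) := by
      have hcont : ContinuousOn (fun s : ℝ => c * s ^ ((k:ℝ)/2 - β)) (Set.Icc r n) :=
        continuousOn_const.mul (ContinuousOn.rpow_const continuousOn_id
          (fun x hx => Or.inl (by have := hx.1; intro h; rw [h] at this; linarith)))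
      exact (hcont.integrableOn_Icc).mono_set Set.Ioo_subset_Icc_self
    rw [← integral_const_mul, ofReal_integral_eq_lintegral_ofReal hInt ?hae]
    case hae =>
      filter_upwards [ae_restrict_mem measurableSet_Ioo] with s hs
      have hs0 : (0:ℝ) < s := lt_trans (by linarith) hs.1
      exact mul_nonneg hcpos.le (Real.rpow_nonneg hs0.le _)
    apply setLIntegral_congr_fun measurableSet_Ioo
    intro t ht
    have ht0 : (0:ℝ) < t := lt_trans (by linarith) ht.1
    have hsq : (0:ℝ) ≤ 2 * Real.sqrt (t / (k+1)) := by positivity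
    rw [hf]
    beta_reduce
    rw [← ENNReal.ofReal_pow hsq, ← ENNReal.ofReal_mul (by positivity)]
    congr 1
    have h1 : Real.sqrt (t / (k+1)) = Real.sqrt t / Real.sqrt (k+1) :=
      Real.sqrt_div ht0.le _
    have h2 : (Real.sqrt t)^k = t ^ ((k:ℝ)/2) := by
      rw [show ((k:ℝ)/2) = (1/2) * (k:ℕ) by ring, Real.rpow_mul ht0.le,
        ← Real.sqrt_eq_rpow, Real.rpow_natCast]
    have h3 : t ^ ((k:ℝ)/2) * t ^ (-β) = t ^ ((k:ℝ)/2 - β) := by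
      rw [← Real.rpow_add ht0]; ring_nf
    calc c * t ^ ((k:ℝ)/2 - β) = c1 * (2 / Real.sqrt (k+1))^k * (t ^ ((k:ℝ)/2) * t ^ (-β)) := by
          rw [h3, hc]
      _ = c1 * t ^ (-β) * ((2 / Real.sqrt (k+1)) * Real.sqrt t)^k := by
          rw [mul_pow, ← h2]; ring
      _ = c1 * t ^ (-β) * (2 * Real.sqrt (t / (k+1)))^k := by
          rw [h1]; ring_nf
  rw [step3, ← step2]
  exact step1


theorem stmt16 (d : ℕ) (hd : 1 ≤ d) (m β : ℝ) (hm : 0 < m) (hβ : 0 ≤ β)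
    (g : ℝ → ℝ) (hg : ∀ s : ℝ, g s = Real.exp (-m * s) * (max 1 s) ^ (-β)) :
    (∃ c : ℝ, 0 < c ∧ ∀ r n : ℝ, 1 < r → r < n →
      ENNReal.ofReal (c * ∫ s in Set.Ioo r n, s ^ (((d : ℝ) - 1) / 2 - β)) ≤
        ∫⁻ y : EuclideanSpace ℝ (Fin d) in
            {y | r < y ⟨0, by omega⟩ ∧ y ⟨0, by omega⟩ < n},
          ENNReal.ofReal
            (g ‖(2 * n) • EuclideanSpace.single (⟨0, by omega⟩ : Fin d) (1 : ℝ) - y‖ *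
              g ‖y‖ /
              g ‖(2 * n) • EuclideanSpace.single (⟨0, by omega⟩ : Fin d) (1 : ℝ)‖)) ∧
    (β ≤ ((d : ℝ) + 1) / 2 → ∀ r : ℝ, 1 < r →
      (⨆ n : {n : ℝ // r < n},
        ∫⁻ y : EuclideanSpace ℝ (Fin d) in
            {y | r < y ⟨0, by omega⟩ ∧ y ⟨0, by omega⟩ < (n : ℝ)},
          ENNReal.ofReal
            (g ‖(2 * (n : ℝ)) • EuclideanSpace.single (⟨0, by omega⟩ : Fin d) (1 : ℝ) - y‖ *
              g ‖y‖ /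
              g ‖(2 * (n : ℝ)) • EuclideanSpace.single (⟨0, by omega⟩ : Fin d) (1 : ℝ)‖)) = ⊤) := by
  obtain ⟨k, rfl⟩ : ∃ k, d = k + 1 := ⟨d - 1, by omega⟩
  obtain ⟨c, hcpos, hkey⟩ := key k hm hβ g hg
  have he : (((k + 1 : ℕ) : ℝ) - 1) / 2 - β = (k : ℝ) / 2 - β := by push_cast; ring
  simp only [Fin.mk_zero, he]
  constructor
  · exact ⟨c, hcpos, hkey⟩
  · intro hβ2 r hr
    have hE : (-1 : ℝ) ≤ (k : ℝ) / 2 - β := by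
      have : ((k + 1 : ℕ) : ℝ) = (k : ℝ) + 1 := by push_cast; ring
      rw [this] at hβ2
      linarith
    rw [iSup_eq_top]
    intro b hb
    set n₀ : ℝ := max (r + 1) (r * Real.exp ((b.toReal + 1) / c)) with hn₀
    have hrn₀ : r < n₀ := lt_of_lt_of_le (lt_add_one r) (le_max_left _ _)
    have hr0 : (0 : ℝ) < r := by linarith
    refine ⟨⟨n₀, hrn₀⟩, ?_⟩
    have hlog : (b.toReal + 1) / c ≤ Real.log (n₀ / r) := by
      have h1 : Real.exp ((b.toReal + 1) / c) ≤ n₀ / r := by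
        rw [le_div_iff₀ hr0]
        calc Real.exp ((b.toReal + 1) / c) * r = r * Real.exp ((b.toReal + 1) / c) := by ring
          _ ≤ n₀ := le_max_right _ _
      calc (b.toReal + 1) / c = Real.log (Real.exp ((b.toReal + 1) / c)) :=
            (Real.log_exp _).symm
        _ ≤ Real.log (n₀ / r) := Real.log_le_log (Real.exp_pos _) h1
    have hint2 : IntegrableOn (fun s : ℝ => s ^ ((k : ℝ) / 2 - β)) (Set.Ioo r n₀) := by
      have hcont : ContinuousOn (fun s : ℝ => s ^ ((k : ℝ) / 2 - β)) (Set.Icc r n₀) :=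
        ContinuousOn.rpow_const continuousOn_id
          (fun x hx => Or.inl (by have := hx.1; intro h; rw [h] at this; linarith))
      exact hcont.integrableOn_Icc.mono_set Set.Ioo_subset_Icc_self
    have hint1 : IntegrableOn (fun s : ℝ => s⁻¹) (Set.Ioo r n₀) := by
      have hcont : ContinuousOn (fun s : ℝ => s⁻¹) (Set.Icc r n₀) := by
        apply ContinuousOn.inv₀ continuousOn_id
        intro x hx
        have := hx.1; intro h; simp only [id_eq] at h; rw [h] at this; linarith
      exact hcont.integrableOn_Icc.mono_set Set.Ioo_subset_Icc_self
    have heval : ∫ s in Set.Ioo r n₀, s⁻¹ = Real.log (n₀ / r) := by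
      rw [← MeasureTheory.integral_Ioc_eq_integral_Ioo,
        ← intervalIntegral.integral_of_le hrn₀.le]
      apply integral_inv
      intro h
      rw [Set.uIcc_of_le hrn₀.le] at h
      have := h.1
      linarith
    have hmono : ∫ s in Set.Ioo r n₀, s⁻¹ ≤ ∫ s in Set.Ioo r n₀, s ^ ((k : ℝ) / 2 - β) := by
      apply setIntegral_mono_on hint1 hint2 measurableSet_Ioo
      intro s hs
      have hs1 : (1 : ℝ) ≤ s := by have := hs.1; linarith
      rw [← Real.rpow_neg_one]
      exact Real.rpow_le_rpow_of_exponent_le hs1 hE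
    have hreal : b.toReal + 1 ≤ c * ∫ s in Set.Ioo r n₀, s ^ ((k : ℝ) / 2 - β) := by
      have h2 : c * ((b.toReal + 1) / c) = b.toReal + 1 := by field_simp
      have h3 : c * ((b.toReal + 1) / c) ≤ c * Real.log (n₀ / r) :=
        mul_le_mul_of_nonneg_left hlog hcpos.le
      have h4 : c * Real.log (n₀ / r) ≤ c * ∫ s in Set.Ioo r n₀, s ^ ((k : ℝ) / 2 - β) := by
        apply mul_le_mul_of_nonneg_left _ hcpos.le
        rw [← heval]
        exact hmono
      linarith
    calc b = ENNReal.ofReal b.toReal := (ENNReal.ofReal_toReal hb.ne).symm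
      _ < ENNReal.ofReal (b.toReal + 1) := by
          rw [ENNReal.ofReal_lt_ofReal_iff (by positivity)]
          linarith
      _ ≤ ENNReal.ofReal (c * ∫ s in Set.Ioo r n₀, s ^ ((k : ℝ) / 2 - β)) :=
          ENNReal.ofReal_le_ofReal hreal
      _ ≤ _ := hkey r n₀ hr hrn₀
end
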